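/- arXiv:2202.08797 — 7 statements merged into one kernel-verified Lean document; each statement's English description precedes it below -/
import Mathlib

section
/- Let α ∈ Φ₊ be simple in the sense that s_α permutes Φ₊ ∖ {α}, assume θα = −α and ⟨λ, α̌⟩ ∉ ℤ. For μ ∈ V and a function δ from the real roots to {±1}, set ℓ_H(μ, δ) = (1/2)·Σ_{β ∈ Φ₊ real, ⟨μ, β̌⟩ ∉ ℤ} (−1)^{⌊⟨μ+ρ_ℝ, β̌⟩⌋}·δ(β). Define ε'(β) = (−1)^{⟨α, β̌⟩}·ε(s_α β) for every real root β. Then ℓ_H(s_α λ, ε') = ℓ_H(λ, ε) + (−1)^{⌊⟨λ, α̌⟩⌋}·ε(α). -/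
open Finset
open scoped Classical

/-- The Hodge shift `ℓ_H(μ, δ) = ½ Σ_{β ∈ Φ₊ real, ⟨μ,β̌⟩ ∉ ℤ} (-1)^⌊⟨μ+ρℝ,β̌⟩⌋ δ(β)`. -/
noncomputable def hodgeShift {V : Type*} [AddCommGroup V] [Module ℝ V]
    (Φpos : Finset V) (coroot : V → Module.Dual ℝ V) (θ : V →ₗ[ℝ] V) (ρℝ : V)
    (μ : V) (δ : V → ℝ) : ℝ :=
  (1 / 2 : ℝ) * ∑ β ∈ Φpos.filter
      (fun β => θ β = -β ∧ ¬∃ n : ℤ, coroot β μ = (n : ℝ)),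
    (-1 : ℝ) ^ ⌊coroot β (μ + ρℝ)⌋ * δ β

/-- Let `α ∈ Φ₊` be simple (`s_α` permutes `Φ₊ \ {α}`), with `θ α = -α` and
`⟨λ, α̌⟩ ∉ ℤ`.  Set `ε'(β) = (-1)^⟨α,β̌⟩ ε(s_α β)` for real roots `β`.  Then
`ℓ_H(s_α λ, ε') = ℓ_H(λ, ε) + (-1)^⌊⟨λ,α̌⟩⌋ ε(α)`. -/
theorem hodgeShift_real_nonintegral_reflection
    {V : Type*} [AddCommGroup V] [Module ℝ V]
    (Φ Φpos : Finset V) (coroot : V → Module.Dual ℝ V)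
    (hspan : Submodule.span ℝ (Φ : Set V) = ⊤)
    (hreduced : ∀ β ∈ Φ, ∀ t : ℝ, t • β ∈ Φ → t = 1 ∨ t = -1)
    (hpair : ∀ β ∈ Φ, coroot β β = 2)
    (hcrys : ∀ β ∈ Φ, ∀ γ ∈ Φ, ∃ n : ℤ, coroot γ β = (n : ℝ))
    (hrefl : ∀ β ∈ Φ, ∀ γ ∈ Φ, γ - coroot β γ • β ∈ Φ)
    (hcorefl : ∀ β ∈ Φ, ∀ γ ∈ Φ,
      coroot (γ - coroot β γ • β) = coroot γ - coroot γ β • coroot β)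
    (hpossub : Φpos ⊆ Φ)
    (hposneg : ∀ β ∈ Φ, (β ∈ Φpos ↔ -β ∉ Φpos))
    (θ : V →ₗ[ℝ] V) (hθinv : ∀ v, θ (θ v) = v) (hθΦ : ∀ β ∈ Φ, θ β ∈ Φ)
    (ρℝ : V) (hρ : (2 : ℝ) • ρℝ = ∑ β ∈ Φpos.filter (fun β => θ β = -β), β)
    (lambda : V)
    (ε : V → ℝ)
    (hεpm : ∀ β ∈ Φ, θ β = -β → ε β = 1 ∨ ε β = -1)
    (hεneg : ∀ β ∈ Φ, θ β = -β → ε (-β) = ε β)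
    (α : V) (hα : α ∈ Φpos)
    (hsimple : ∀ β ∈ Φpos, β ≠ α →
      β - coroot α β • α ∈ Φpos ∧ β - coroot α β • α ≠ α)
    (hθα : θ α = -α)
    (hnonint : ¬∃ n : ℤ, coroot α lambda = (n : ℝ)) :
    hodgeShift Φpos coroot θ ρℝ (lambda - coroot α lambda • α)
        (fun β => (-1 : ℝ) ^ ⌊coroot β α⌋ * ε (β - coroot α β • α))
      = hodgeShift Φpos coroot θ ρℝ lambda ε
        + (-1 : ℝ) ^ ⌊coroot α lambda⌋ * ε α := by
  classical
  have hαΦ : α ∈ Φ := hpossub hα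
  have hαα : coroot α α = 2 := hpair α hαΦ
  have hne : (-1 : ℝ) ≠ 0 := by norm_num
  have hcne : ∀ n : ℤ, coroot α lambda ≠ (n : ℝ) := fun n h => hnonint ⟨n, h⟩
  set c : ℝ := coroot α lambda with hcdef
  -- floor facts for the non-integral c
  have hflt : (⌊c⌋ : ℝ) < c := lt_of_le_of_ne (Int.floor_le c) (Ne.symm (hcne ⌊c⌋))
  have hfub : c < (⌊c⌋ : ℝ) + 1 := Int.lt_floor_add_one c
  have hfneg : ⌊-c⌋ = -⌊c⌋ - 1 := by
    rw [Int.floor_eq_iff]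
    constructor <;> push_cast <;> linarith
  -- sign helpers
  have hpow : ∀ n : ℤ, ((-1:ℝ))^n = 1 ∨ ((-1:ℝ))^n = -1 := fun n =>
    n.even_or_odd.imp (fun h => h.neg_one_zpow) (fun h => h.neg_one_zpow)
  have hsq : ∀ n : ℤ, ((-1:ℝ))^n * ((-1:ℝ))^n = 1 := fun n => by
    rcases hpow n with h | h <;> rw [h] <;> norm_num
  have hnegpow : ∀ n : ℤ, ((-1:ℝ))^(-n) = ((-1:ℝ))^n := fun n => by
    rw [zpow_neg]; rcases hpow n with h | h <;> rw [h] <;> norm_num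
  -- reflection helpers
  have hcoα : ∀ β : V, coroot α (β - coroot α β • α) = -coroot α β := by
    intro β; rw [map_sub, map_smul, smul_eq_mul, hαα]; ring
  have hsinv : ∀ β : V, (β - coroot α β • α) - coroot α (β - coroot α β • α) • α = β := by
    intro β; rw [hcoα, neg_smul]; abel
  have hθs : ∀ β : V, θ β = -β → θ (β - coroot α β • α) = -(β - coroot α β • α) := by
    intro β h
    rw [map_sub, map_smul, h, hθα, smul_neg]; abel
  have hcoro : ∀ β ∈ Φ, ∀ μ : V,
      coroot (β - coroot α β • α) μ = coroot β μ - coroot β α * coroot α μ := by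
    intro β hβ μ
    rw [hcorefl α hαΦ β hβ, LinearMap.sub_apply, LinearMap.smul_apply, smul_eq_mul]
  have hswap : ∀ β ∈ Φ, coroot β (lambda - c • α) = coroot (β - coroot α β • α) lambda := by
    intro β hβ
    rw [hcoro β hβ, map_sub, map_smul, smul_eq_mul]; ring
  -- pairing of ρℝ with α̌ is 1
  have hαmem : α ∈ Φpos.filter (fun β => θ β = -β) := mem_filter.mpr ⟨hα, hθα⟩
  have hρα : coroot α ρℝ = 1 := by
    have h1 : coroot α ((2:ℝ) • ρℝ)
        = coroot α (∑ β ∈ Φpos.filter (fun β => θ β = -β), β) := by rw [hρ]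
    rw [map_smul, map_sum, smul_eq_mul, ← Finset.add_sum_erase _ _ hαmem, hαα] at h1
    have h0 : ∑ β ∈ (Φpos.filter (fun β => θ β = -β)).erase α, coroot α β = 0 := by
      apply Finset.sum_involution (fun β _ => β - coroot α β • α)
      · intro β hβ; rw [hcoα]; ring
      · intro β hβ hβ0
        have hcβ : coroot α β ≠ 0 := by
          intro h; rw [h] at hβ0; simp at hβ0
        have hα0 : α ≠ 0 := by
          intro h; rw [h] at hαα; simp at hαα
        intro h
        exact hcβ (by simpa [sub_eq_self, hα0] using h)
      · intro β hβ
        have hβp := mem_filter.mp (mem_of_mem_erase hβ)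
        have hs := hsimple β hβp.1 (ne_of_mem_erase hβ)
        exact mem_erase.mpr ⟨hs.2, mem_filter.mpr ⟨hs.1, hθs β hβp.2⟩⟩
      · intro β hβ; exact hsinv β
    rw [h0] at h1; linarith
  -- membership of α in both index sets
  have hcas : coroot α (lambda - c • α) = -c := by
    rw [map_sub, map_smul, smul_eq_mul, hαα, ← hcdef]; ring
  have hαS₁ : α ∈ Φpos.filter
      (fun β => θ β = -β ∧ ¬∃ n : ℤ, coroot β (lambda - coroot α lambda • α) = (n : ℝ)) := by
    refine mem_filter.mpr ⟨hα, hθα, ?_⟩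
    rintro ⟨n, hn⟩
    rw [← hcdef] at hn
    rw [hcas] at hn
    exact hcne (-n) (by push_cast; linarith)
  have hαS₂ : α ∈ Φpos.filter
      (fun β => θ β = -β ∧ ¬∃ n : ℤ, coroot β lambda = (n : ℝ)) :=
    mem_filter.mpr ⟨hα, hθα, hnonint⟩
  unfold hodgeShift
  rw [← Finset.add_sum_erase _ _ hαS₁, ← Finset.add_sum_erase _ _ hαS₂, ← hcdef]
  -- the sums over the erased sets agree
  have hsum : (∑ β ∈ (Φpos.filter (fun β => θ β = -β ∧
        ¬∃ n : ℤ, coroot β (lambda - c • α) = (n : ℝ))).erase α,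
        (-1 : ℝ) ^ ⌊coroot β (lambda - c • α + ρℝ)⌋ *
          ((-1 : ℝ) ^ ⌊coroot β α⌋ * ε (β - coroot α β • α)))
      = ∑ β ∈ (Φpos.filter (fun β => θ β = -β ∧
        ¬∃ n : ℤ, coroot β lambda = (n : ℝ))).erase α,
        (-1 : ℝ) ^ ⌊coroot β (lambda + ρℝ)⌋ * ε β := by
    apply Finset.sum_nbij' (fun β => β - coroot α β • α) (fun β => β - coroot α β • α)
    · intro β hβ
      obtain ⟨hβp, hβr, hβn⟩ := mem_filter.mp (mem_of_mem_erase hβ)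
      have hs := hsimple β hβp (ne_of_mem_erase hβ)
      refine mem_erase.mpr ⟨hs.2, mem_filter.mpr ⟨hs.1, hθs β hβr, ?_⟩⟩
      rw [← hswap β (hpossub hβp)]
      exact hβn
    · intro β hβ
      obtain ⟨hβp, hβr, hβn⟩ := mem_filter.mp (mem_of_mem_erase hβ)
      have hs := hsimple β hβp (ne_of_mem_erase hβ)
      refine mem_erase.mpr ⟨hs.2, mem_filter.mpr ⟨hs.1, hθs β hβr, ?_⟩⟩
      rw [hswap _ (hpossub hs.1), hsinv β]
      exact hβn
    · intro β _; exact hsinv β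
    · intro β _; exact hsinv β
    · intro β hβ
      obtain ⟨hβp, hβr, hβn⟩ := mem_filter.mp (mem_of_mem_erase hβ)
      have hβΦ : β ∈ Φ := hpossub hβp
      obtain ⟨n, hn⟩ := hcrys α hαΦ β hβΦ
      have e1 : coroot β (lambda - c • α + ρℝ)
          = coroot (β - coroot α β • α) (lambda + ρℝ) + (n : ℝ) := by
        have h1 : coroot α (lambda + ρℝ) = c + 1 := by rw [map_add, ← hcdef, hρα]
        rw [map_add, map_sub, map_smul, smul_eq_mul, hcoro β hβΦ, map_add, h1, hn]
        ring
      rw [e1, Int.floor_add_intCast, hn, Int.floor_intCast, zpow_add₀ hne]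
      rw [mul_assoc, ← mul_assoc ((-1:ℝ)^n), hsq n, one_mul]
  rw [hsum]
  -- the α-terms
  have hLα : coroot α (lambda - c • α + ρℝ) = -c + 1 := by
    rw [map_add, hcas, hρα]
  have hRα : coroot α (lambda + ρℝ) = c + 1 := by
    rw [map_add, ← hcdef, hρα]
  have hεα : ε (α - coroot α α • α) = ε α := by
    have h2 : α - coroot α α • α = -α := by
      rw [hαα, two_smul]; abel
    rw [h2, hεneg α hαΦ hθα]
  beta_reduce
  rw [hLα, hRα, hεα]
  have hfL : ⌊-c + 1⌋ = -⌊c⌋ := by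
    rw [show (-c + 1 : ℝ) = -c + (1:ℤ) by norm_num, Int.floor_add_intCast, hfneg]; ring
  have hfR : ⌊c + 1⌋ = ⌊c⌋ + 1 := by
    rw [show (c + 1 : ℝ) = c + (1:ℤ) by norm_num, Int.floor_add_intCast]
  have hfα : ⌊coroot α α⌋ = 2 := by rw [hαα]; norm_num
  rw [hfL, hfR, hfα, hnegpow, zpow_add₀ hne, zpow_one]
  have h2 : ((-1:ℝ)) ^ (2:ℤ) = 1 := by norm_num
  rw [h2, one_mul]
  ring
end

section
/- Let R be a commutative ring, s ∈ R, and let M ⊆ N be R-modules such that multiplication by s is injective on N. Define an increasing filtration on N/sN by J_n(N) = image of {x ∈ N : sⁿ·x ∈ M} for n ≥ 0, with the convention J_{−1}(N) = 0, and an increasing filtration on M/sM by J_{−n}(M) = image of M ∩ sⁿN for n ≥ 0. Then for every n ≥ 0, the assignment x ↦ sⁿ·x induces a well-defined isomorphism of R-modules J_n(N)/J_{n−1}(N) ≅ J_{−n}(M)/J_{−n−1}(M). -/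
set_option maxHeartbeats 2000000 in
/-- Let `R` be a commutative ring, `s ∈ R`, and `M ⊆ N` `R`-modules such that
multiplication by `s` is injective on `N`.  Define the Jantzen filtrations
`J_n(N) = image in N/sN of {x ∈ N : sⁿ x ∈ M}` (`n ≥ 0`, with `J_{-1}(N) = 0`) and
`J_{-n}(M) = image in M/sM of M ∩ sⁿN` (`n ≥ 0`).  Then for every `n ≥ 0`, `x ↦ sⁿ x`
induces a well-defined isomorphism `J_n(N)/J_{n-1}(N) ≅ J_{-n}(M)/J_{-n-1}(M)`. -/
theorem jantzen_graded_pieces_iso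
    {R : Type*} [CommRing R] {N : Type*} [AddCommGroup N] [Module R N]
    (s : R) (M : Submodule R N)
    (hs : Function.Injective (fun x : N => s • x)) (n : ℕ) :
    -- `sN` and `sM`
    ∀ (sN : Submodule R N), sN = LinearMap.range (s • (LinearMap.id : N →ₗ[R] N)) →
    ∀ (sM : Submodule R ↥M), sM = LinearMap.range (s • (LinearMap.id : ↥M →ₗ[R] ↥M)) →
    -- `A k = {x ∈ N : s^k • x ∈ M}`, so that `J_k(N)` is the image of `A k` in `N/sN`
    ∀ (A : ℕ → Submodule R N),
      (∀ k, A k = Submodule.comap ((s ^ k) • (LinearMap.id : N →ₗ[R] N)) M) →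
    ∀ (JN : ℕ → Submodule R (N ⧸ sN)), (∀ k, JN k = Submodule.map sN.mkQ (A k)) →
    -- `JM k` is the image of `M ∩ s^k N` in `M/sM`, i.e. `J_{-k}(M)`
    ∀ (JM : ℕ → Submodule R (↥M ⧸ sM)),
      (∀ k, JM k = Submodule.map sM.mkQ (Submodule.comap M.subtype
        (LinearMap.range ((s ^ k) • (LinearMap.id : N →ₗ[R] N))))) →
    ∀ (JNprev : Submodule R (N ⧸ sN)),
      (n = 0 → JNprev = ⊥) → (∀ m : ℕ, n = m + 1 → JNprev = JN m) →
    ∃ e : (↥(JN n) ⧸ Submodule.comap (JN n).subtype JNprev) ≃ₗ[R]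
          (↥(JM n) ⧸ Submodule.comap (JM n).subtype (JM (n + 1))),
      ∀ (x : N) (hx : x ∈ A n) (h1 : sN.mkQ x ∈ JN n)
        (y : ↥M) (hy : (y : N) = s ^ n • x) (h2 : sM.mkQ y ∈ JM n),
        e (Submodule.Quotient.mk ⟨sN.mkQ x, h1⟩) =
          Submodule.Quotient.mk ⟨sM.mkQ y, h2⟩ := by
  intro sN hsN sM hsM A hA JN hJN JM hJM JNprev h0 hsucc
  have memA : ∀ (k : ℕ) (x : N), x ∈ A k ↔ s ^ k • x ∈ M := by
    intro k x; rw [hA k]; simp [Submodule.mem_comap]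
  have memsN : ∀ x : N, x ∈ sN ↔ ∃ w, s • w = x := by
    intro x; rw [hsN]; simp [LinearMap.mem_range]
  have memsM : ∀ x : ↥M, x ∈ sM ↔ ∃ w, s • w = x := by
    intro x; rw [hsM]; simp [LinearMap.mem_range]
  have memB : ∀ (k : ℕ) (y : ↥M),
      y ∈ Submodule.comap M.subtype
        (LinearMap.range ((s ^ k) • (LinearMap.id : N →ₗ[R] N))) ↔
      ∃ w : N, s ^ k • w = (y : N) := by
    intro k y; simp [Submodule.mem_comap, LinearMap.mem_range]
  -- the map A n → JN n
  let toJN : ↥(A n) →ₗ[R] ↥(JN n) :=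
    LinearMap.codRestrict (JN n) (sN.mkQ ∘ₗ (A n).subtype)
      (fun x => by rw [hJN n]; exact ⟨x, x.2, rfl⟩)
  let p : ↥(A n) →ₗ[R] ↥(JN n) ⧸ Submodule.comap (JN n).subtype JNprev :=
    (Submodule.comap (JN n).subtype JNprev).mkQ ∘ₗ toJN
  -- the map A n → M, x ↦ s^n • x
  let g : ↥(A n) →ₗ[R] ↥M :=
    LinearMap.codRestrict M (((s ^ n) • (LinearMap.id : N →ₗ[R] N)) ∘ₗ (A n).subtype)
      (fun x => by simpa using (memA n x).1 x.2)
  have hg : ∀ x : ↥(A n), (g x : N) = s ^ n • (x : N) := fun x => rfl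
  let toJM : ↥(A n) →ₗ[R] ↥(JM n) :=
    LinearMap.codRestrict (JM n) (sM.mkQ ∘ₗ g)
      (fun x => by
        rw [hJM n]
        exact ⟨g x, (memB n (g x)).2 ⟨(x : N), (hg x).symm⟩, rfl⟩)
  let q : ↥(A n) →ₗ[R] ↥(JM n) ⧸ Submodule.comap (JM n).subtype (JM (n + 1)) :=
    (Submodule.comap (JM n).subtype (JM (n + 1))).mkQ ∘ₗ toJM
  -- surjectivity
  have htoJN : Function.Surjective toJN := by
    rintro ⟨z, hz⟩
    rw [hJN n] at hz
    obtain ⟨x, hx, rfl⟩ := hz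
    exact ⟨⟨x, hx⟩, rfl⟩
  have hp : Function.Surjective p := (Submodule.mkQ_surjective _).comp htoJN
  have htoJM : Function.Surjective toJM := by
    rintro ⟨z, hz⟩
    rw [hJM n] at hz
    obtain ⟨y, hy, rfl⟩ := hz
    obtain ⟨w, hw⟩ := (memB n y).1 hy
    have hwA : w ∈ A n := (memA n w).2 (by rw [hw]; exact y.2)
    refine ⟨⟨w, hwA⟩, ?_⟩
    apply Subtype.ext
    show sM.mkQ (g ⟨w, hwA⟩) = sM.mkQ y
    congr 1
    exact Subtype.ext (by rw [hg]; exact hw)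
  have hq : Function.Surjective q := (Submodule.mkQ_surjective _).comp htoJM
  -- the key equivalence of kernels
  have key : ∀ (x : N) (hx : s ^ n • x ∈ M),
      (sN.mkQ x ∈ JNprev ↔ sM.mkQ ⟨s ^ n • x, hx⟩ ∈ JM (n + 1)) := by
    intro x hx
    rcases n with _ | m
    · rw [h0 rfl]
      simp only [Submodule.mem_bot, Submodule.mkQ_apply, Submodule.Quotient.mk_eq_zero]
      constructor
      · intro hxs
        obtain ⟨w, hw⟩ := (memsN x).1 hxs
        rw [hJM 1]
        refine ⟨⟨s ^ 0 • x, hx⟩, (memB 1 _).2 ⟨w, ?_⟩, rfl⟩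
        simp only [pow_one, pow_zero, one_smul]
        exact hw
      · intro h
        rw [hJM 1] at h
        obtain ⟨b, hb, hbe⟩ := h
        obtain ⟨z, hz⟩ := (memB 1 b).1 hb
        have hdiff : b - ⟨s ^ 0 • x, hx⟩ ∈ sM := (Submodule.Quotient.eq _).mp hbe
        obtain ⟨m', hm'⟩ := (memsM _).1 hdiff
        have hval : s • (m' : N) = (b : N) - s ^ 0 • x := by
          have := congrArg (Subtype.val) hm'
          simpa using this
        refine (memsN x).2 ⟨z - m', ?_⟩
        have h1 : s • (m' : N) = s • z - x := by
          rw [hval, ← hz]; simp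
        rw [smul_sub, h1]
        abel
    · rw [hsucc m rfl]
      constructor
      · intro hmem
        rw [hJN m] at hmem
        obtain ⟨a, ha, hae⟩ := hmem
        have hdiff : a - x ∈ sN := (Submodule.Quotient.eq _).mp hae
        obtain ⟨w, hw⟩ := (memsN _).1 hdiff
        have hsma : s ^ m • a ∈ M := (memA m a).1 ha
        have hmem2 : s ^ (m + 1) • x - s • (s ^ m • a) ∈ M :=
          M.sub_mem hx (M.smul_mem s hsma)
        have hxeq : x = a - s • w := by rw [hw]; abel
        have hval : s ^ (m + 2) • (-w) = s ^ (m + 1) • x - s • (s ^ m • a) := by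
          rw [hxeq]
          module
        rw [hJM (m + 2)]
        refine ⟨⟨s ^ (m + 1) • x - s • (s ^ m • a), hmem2⟩,
          (memB (m + 2) _).2 ⟨-w, hval⟩, ?_⟩
        refine (Submodule.Quotient.eq _).mpr ((memsM _).2 ⟨-⟨s ^ m • a, hsma⟩, ?_⟩)
        apply Subtype.ext
        show s • -(s ^ m • a) = (s ^ (m + 1) • x - s • (s ^ m • a)) - s ^ (m + 1) • x
        rw [smul_neg]
        abel
      · intro h
        rw [hJM (m + 2)] at h
        obtain ⟨b, hb, hbe⟩ := h
        obtain ⟨z, hz⟩ := (memB (m + 2) b).1 hb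
        have hdiff : b - ⟨s ^ (m + 1) • x, hx⟩ ∈ sM := (Submodule.Quotient.eq _).mp hbe
        obtain ⟨m', hm'⟩ := (memsM _).1 hdiff
        have hval : s • (m' : N) = (b : N) - s ^ (m + 1) • x := by
          have := congrArg (Subtype.val) hm'
          simpa using this
        have hc : s ^ (m + 1) • z - s ^ m • x = (m' : N) := by
          apply hs
          show s • (s ^ (m + 1) • z - s ^ m • x) = s • (m' : N)
          rw [hval, ← hz]
          module
        have hxA : x - s • z ∈ A m := by
          refine (memA m _).2 ?_
          have : s ^ m • (x - s • z) = -(m' : N) := by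
            rw [← hc]
            module
          rw [this]
          exact M.neg_mem m'.2
        rw [hJN m]
        refine ⟨x - s • z, hxA, ?_⟩
        refine (Submodule.Quotient.eq _).mpr ((memsN _).2 ⟨-z, ?_⟩)
        show s • -z = (x - s • z) - x
        rw [smul_neg]
        abel
  -- kernels agree
  have hker : LinearMap.ker p = LinearMap.ker q := by
    ext x
    simp only [p, q, LinearMap.mem_ker, LinearMap.comp_apply, Submodule.mkQ_apply,
      Submodule.Quotient.mk_eq_zero, Submodule.mem_comap]
    exact key (x : N) ((memA n x).1 x.2)
  -- assemble the equivalence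
  let e1 := p.quotKerEquivOfSurjective hp
  let e2 := q.quotKerEquivOfSurjective hq
  refine ⟨e1.symm.trans ((Submodule.quotEquivOfEq _ _ hker).trans e2), ?_⟩
  intro x hx h1 y hy h2
  have e1app : ∀ z : ↥(A n), e1 (Submodule.Quotient.mk z) = p z := by
    intro z
    have h : e1 (Submodule.Quotient.mk z)
        = ((p.quotKerEquivRange (Submodule.Quotient.mk z)) : _) := rfl
    rw [h, LinearMap.quotKerEquivRange_apply_mk]
  have e2app : ∀ z : ↥(A n), e2 (Submodule.Quotient.mk z) = q z := by
    intro z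
    have h : e2 (Submodule.Quotient.mk z)
        = ((q.quotKerEquivRange (Submodule.Quotient.mk z)) : _) := rfl
    rw [h, LinearMap.quotKerEquivRange_apply_mk]
  have hpx : p ⟨x, hx⟩ = Submodule.Quotient.mk ⟨sN.mkQ x, h1⟩ := rfl
  have hqx : q ⟨x, hx⟩ = Submodule.Quotient.mk ⟨sM.mkQ y, h2⟩ := by
    show Submodule.Quotient.mk (toJM ⟨x, hx⟩) = Submodule.Quotient.mk ⟨sM.mkQ y, h2⟩
    congr 1
    apply Subtype.ext
    show sM.mkQ (g ⟨x, hx⟩) = sM.mkQ y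
    congr 1
    exact Subtype.ext (by rw [hg]; exact hy.symm)
  calc (e1.symm.trans ((Submodule.quotEquivOfEq _ _ hker).trans e2))
        (Submodule.Quotient.mk ⟨sN.mkQ x, h1⟩)
      = (e1.symm.trans ((Submodule.quotEquivOfEq _ _ hker).trans e2)) (p ⟨x, hx⟩) := by
        rw [hpx]
    _ = ((Submodule.quotEquivOfEq _ _ hker).trans e2) (e1.symm (p ⟨x, hx⟩)) := rfl
    _ = ((Submodule.quotEquivOfEq _ _ hker).trans e2) (e1.symm (e1 (Submodule.Quotient.mk ⟨x, hx⟩))) := by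
        rw [e1app]
    _ = ((Submodule.quotEquivOfEq _ _ hker).trans e2) (Submodule.Quotient.mk ⟨x, hx⟩) := by
        rw [e1.symm_apply_apply]
    _ = e2 (Submodule.quotEquivOfEq _ _ hker (Submodule.Quotient.mk ⟨x, hx⟩)) := rfl
    _ = e2 (Submodule.Quotient.mk ⟨x, hx⟩) := by
        rw [Submodule.quotEquivOfEq_mk]
    _ = q ⟨x, hx⟩ := e2app _
    _ = Submodule.Quotient.mk ⟨sM.mkQ y, h2⟩ := hqx
end

section
/- Let A be a multiplicatively written abelian group containing an element v of infinite order; set u = v². Let D: A → A be a group homomorphism with D ∘ D = id and D(v) = v^{−1}, extended to a ring involution of the integral group ring ℤ[A], and let |·|: A → ℝ_{>0} be a group homomorphism (a multiplicative norm) with |u| > 1 and |D(a)| = |a|^{−1} for all a ∈ A. Let Γ be a finite set with a partial order ≤ and a function ℓ_I: Γ → ℤ, let M be the free ℤ[A]-module with basis {B_γ}_{γ ∈ Γ}, and let D_M: M → M be an additive map satisfying D_M(a·m) = D(a)·D_M(m) for all a ∈ A, m ∈ M, and D_M(B_γ) = u^{−ℓ_I(γ)}·(B_γ + Σ_{γ'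 < γ} R_{γ'γ} B_{γ'}) with coefficients R_{γ'γ} ∈ ℤ[A]. Then for each γ ∈ Γ there is at most one element C_γ ∈ M such that D_M(C_γ) = u^{−ℓ_I(γ)}·C_γ and C_γ = B_γ + Σ_{γ' < γ} P_{γ'γ} B_{γ'}, where each coefficient P_{γ'γ} is a ℤ-linear combination of elements a ∈ A with |a| ≤ |u|^{(ℓ_I(γ) − ℓ_I(γ') − 1)/2}. -/
open Finset
open scoped Classical

set_option linter.unusedVariables false

lemma kl_nu_zpow {A : Type*} [CommGroup A] (ν : A → ℝ)
    (hν : ∀ a b, ν (a * b) = ν a * ν b) (hνpos : ∀ a, 0 < ν a) :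
    ∀ (n : ℤ) (a : A), ν (a ^ n) = ν a ^ n := by
  have h1 : ν 1 = 1 := by
    have h := hν 1 1
    simp only [mul_one] at h
    nlinarith [hνpos 1]
  let φ : A →* ℝˣ :=
    { toFun := fun a => Units.mk0 (ν a) (hνpos a).ne'
      map_one' := by ext; simp [h1]
      map_mul' := by intro a b; ext; simp [hν] }
  intro n a
  have := congrArg (Units.val) (map_zpow φ a n)
  simpa [φ, Units.val_zpow_eq_zpow_val] using this

lemma kl_aux {A : Type*} [CommGroup A] (v : A) (D : A →* A) (hDD : ∀ a, D (D a) = a)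
    (ν : A → ℝ) (hν : ∀ a b, ν (a * b) = ν a * ν b) (hνpos : ∀ a, 0 < ν a)
    (hνu : 1 < ν (v ^ 2)) (hνD : ∀ a, ν (D a) = (ν a)⁻¹)
    (d e : ℤ) (q : MonoidAlgebra ℤ A)
    (hbound : ∀ a ∈ q.coeff.support, ν a ≤ (ν (v ^ 2)) ^ (((d : ℝ) - (e : ℝ) - 1) / 2))
    (heq : MonoidAlgebra.mapDomainRingHom ℤ D q * MonoidAlgebra.single ((v ^ 2) ^ (-e)) (1 : ℤ)
      = MonoidAlgebra.single ((v ^ 2) ^ (-d)) (1 : ℤ) * q) : q = 0 := by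
  by_contra hq
  obtain ⟨a, ha⟩ := Finsupp.support_nonempty_iff.mpr (mt MonoidAlgebra.coeff_eq_zero.mp hq)
  have hDinj : Function.Injective D := Function.LeftInverse.injective hDD
  set u := v ^ 2 with hu
  have h1 := congrArg (fun f : MonoidAlgebra ℤ A => f.coeff (u ^ (-e) * D a)) heq
  simp only [MonoidAlgebra.coeff_mul_single_apply, MonoidAlgebra.coeff_single_mul_apply, one_mul,
    mul_one] at h1
  have hx1 : u ^ (-e) * D a * (u ^ (-e))⁻¹ = D a := by
    rw [mul_comm (u ^ (-e)) (D a), mul_assoc, mul_inv_cancel, mul_one]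
  have hx2 : (u ^ (-d))⁻¹ * (u ^ (-e) * D a) = u ^ (d - e) * D a := by
    rw [zpow_neg, inv_inv, ← mul_assoc, ← zpow_add, ← sub_eq_add_neg]
  rw [hx1, hx2] at h1
  have hmd : ((MonoidAlgebra.mapDomainRingHom ℤ D) q).coeff (D a) = q.coeff a :=
    Finsupp.mapDomain_apply hDinj q.coeff a
  rw [hmd] at h1
  set b := u ^ (d - e) * D a with hb
  have hbmem : b ∈ q.coeff.support := by
    rw [Finsupp.mem_support_iff, ← h1]
    exact Finsupp.mem_support_iff.mp ha
  have hνb : ν b = ν u ^ (d - e : ℤ) * (ν a)⁻¹ := by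
    rw [hb, hν, kl_nu_zpow ν hν hνpos, hνD]
  have hba := hbound a ha
  have hbb := hbound b hbmem
  have hprod : ν a * ν b = ν u ^ ((d : ℝ) - (e : ℝ)) := by
    have h2 : ν a * ν b = ν u ^ (d - e : ℤ) := by
      rw [hνb, mul_comm (ν u ^ (d - e)) (ν a)⁻¹, ← mul_assoc,
        mul_inv_cancel₀ (hνpos a).ne', one_mul]
    rw [h2, show ((d : ℝ) - (e : ℝ)) = ((d - e : ℤ) : ℝ) by push_cast; ring,
      Real.rpow_intCast]
  have hupos : (0 : ℝ) < ν u := hνpos u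
  have hle : ν u ^ ((d : ℝ) - (e : ℝ)) ≤ ν u ^ ((d : ℝ) - (e : ℝ) - 1) := by
    rw [← hprod]
    calc ν a * ν b
        ≤ (ν u ^ (((d : ℝ) - (e : ℝ) - 1) / 2)) * (ν u ^ (((d : ℝ) - (e : ℝ) - 1) / 2)) :=
          mul_le_mul hba hbb (hνpos b).le (Real.rpow_nonneg hupos.le _)
      _ = ν u ^ ((d : ℝ) - (e : ℝ) - 1) := by
          rw [← Real.rpow_add hupos]; ring_nf
  have := (Real.rpow_le_rpow_left_iff hνu).mp hle
  linarith


/-- (Uniqueness in the Kazhdan–Lusztig yoga, Proposition 5.10 of the paper.)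
Let `A` be a multiplicative abelian group with an element `v` of infinite order, `u = v²`,
`D : A → A` an involutive homomorphism with `D v = v⁻¹`, and `ν : A → ℝ_{>0}` a multiplicative
norm with `ν u > 1` and `ν (D a) = (ν a)⁻¹`.  Let `Γ` be a finite poset, `ℓI : Γ → ℤ`,
`M` the free `ℤ[A]`-module on `{B_γ}`, and `DM : M → M` additive with
`DM (a • m) = D a • DM m` and `DM B_γ = u^{-ℓI γ} • (B_γ + Σ_{γ' < γ} R_{γ'γ} • B_{γ'})`.
Then for each `γ` there is at most one `C_γ` with `DM C_γ = u^{-ℓI γ} • C_γ` and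
`C_γ = B_γ + Σ_{γ' < γ} P_{γ'γ} • B_{γ'}` where each `P_{γ'γ}` is a `ℤ`-linear combination
of elements `a ∈ A` with `ν a ≤ (ν u)^{(ℓI γ - ℓI γ' - 1)/2}`. -/
theorem kazhdan_lusztig_basis_unique
    {A : Type*} [CommGroup A] (v : A)
    (hv : ∀ m : ℤ, v ^ m = 1 → m = 0)
    (D : A →* A) (hDD : ∀ a, D (D a) = a) (hDv : D v = v⁻¹)
    (ν : A → ℝ) (hν : ∀ a b, ν (a * b) = ν a * ν b) (hνpos : ∀ a, 0 < ν a)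
    (hνu : 1 < ν (v ^ 2)) (hνD : ∀ a, ν (D a) = (ν a)⁻¹)
    {Γ : Type*} [Fintype Γ] [PartialOrder Γ] (ℓI : Γ → ℤ)
    (DM : (Γ →₀ MonoidAlgebra ℤ A) → (Γ →₀ MonoidAlgebra ℤ A))
    (hDMadd : ∀ x y, DM (x + y) = DM x + DM y)
    (hDMsmul : ∀ (a : A) (m : Γ →₀ MonoidAlgebra ℤ A),
      DM (MonoidAlgebra.single a (1 : ℤ) • m) = MonoidAlgebra.single (D a) (1 : ℤ) • DM m)
    (hDMtri : ∀ γ : Γ, ∃ R : Γ → MonoidAlgebra ℤ A,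
      DM (Finsupp.single γ 1) = MonoidAlgebra.single ((v ^ 2) ^ (-ℓI γ)) (1 : ℤ) •
        (Finsupp.single γ (1 : MonoidAlgebra ℤ A)
          + ∑ γ' ∈ univ.filter (fun γ' => γ' < γ),
              R γ' • Finsupp.single γ' (1 : MonoidAlgebra ℤ A)))
    (γ : Γ) (C C' : Γ →₀ MonoidAlgebra ℤ A)
    (hC : DM C = MonoidAlgebra.single ((v ^ 2) ^ (-ℓI γ)) (1 : ℤ) • C)
    (hC' : DM C' = MonoidAlgebra.single ((v ^ 2) ^ (-ℓI γ)) (1 : ℤ) • C')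
    (hPC : ∃ P : Γ → MonoidAlgebra ℤ A,
      C = Finsupp.single γ (1 : MonoidAlgebra ℤ A)
          + ∑ γ' ∈ univ.filter (fun γ' => γ' < γ),
              P γ' • Finsupp.single γ' (1 : MonoidAlgebra ℤ A)
        ∧ ∀ γ' : Γ, γ' < γ → ∀ a ∈ (P γ').coeff.support,
            ν a ≤ (ν (v ^ 2)) ^ (((ℓI γ : ℝ) - (ℓI γ' : ℝ) - 1) / 2))
    (hPC' : ∃ P : Γ → MonoidAlgebra ℤ A,
      C' = Finsupp.single γ (1 : MonoidAlgebra ℤ A)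
          + ∑ γ' ∈ univ.filter (fun γ' => γ' < γ),
              P γ' • Finsupp.single γ' (1 : MonoidAlgebra ℤ A)
        ∧ ∀ γ' : Γ, γ' < γ → ∀ a ∈ (P γ').coeff.support,
            ν a ≤ (ν (v ^ 2)) ^ (((ℓI γ : ℝ) - (ℓI γ' : ℝ) - 1) / 2)) :
    C = C' :=by
  obtain ⟨P, hCeq, hPb⟩ := hPC
  obtain ⟨P', hC'eq, hP'b⟩ := hPC'
  set S : Finset Γ := univ.filter (fun γ' => γ' < γ) with hS
  set Q : Γ → MonoidAlgebra ℤ A := fun γ' => P γ' - P' γ' with hQ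
  set F : (Γ →₀ MonoidAlgebra ℤ A) →+ (Γ →₀ MonoidAlgebra ℤ A) :=
    AddMonoidHom.mk' DM hDMadd with hF
  -- DM commutes with smul by arbitrary ring elements
  have key_smul : ∀ (q : MonoidAlgebra ℤ A) (m : Γ →₀ MonoidAlgebra ℤ A),
      DM (q • m) = (MonoidAlgebra.mapDomainRingHom ℤ D) q • DM m := by
    intro q m
    induction q using MonoidAlgebra.induction_linear with
    | zero =>
        rw [zero_smul, map_zero, zero_smul]
        exact F.map_zero
    | add f g hf hg =>
        rw [add_smul, hDMadd, hf, hg, map_add, add_smul]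
    | single a b =>
        have h1 : (MonoidAlgebra.single a b : MonoidAlgebra ℤ A)
            = b • MonoidAlgebra.single a (1 : ℤ) := by
          rw [MonoidAlgebra.smul_single, smul_eq_mul, mul_one]
        have h2 : (MonoidAlgebra.mapDomainRingHom ℤ D) (MonoidAlgebra.single a b)
            = MonoidAlgebra.single (D a) b := MonoidAlgebra.mapDomain_single
        calc DM ((MonoidAlgebra.single a b) • m)
            = DM ((b • MonoidAlgebra.single a (1 : ℤ)) • m) := by rw [← h1]
          _ = DM (b • (MonoidAlgebra.single a (1 : ℤ) • m)) := by rw [smul_assoc]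
          _ = b • DM (MonoidAlgebra.single a (1 : ℤ) • m) :=
              map_zsmul F b _
          _ = b • (MonoidAlgebra.single (D a) (1 : ℤ) • DM m) := by rw [hDMsmul]
          _ = (b • MonoidAlgebra.single (D a) (1 : ℤ)) • DM m := (smul_assoc _ _ _).symm
          _ = MonoidAlgebra.single (D a) b • DM m := by
              rw [MonoidAlgebra.smul_single, smul_eq_mul, mul_one]
          _ = (MonoidAlgebra.mapDomainRingHom ℤ D) (MonoidAlgebra.single a b) • DM m := by
              rw [h2]
  have hE : C - C' = ∑ γ' ∈ S, Q γ' • Finsupp.single γ' (1 : MonoidAlgebra ℤ A) := by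
    rw [hCeq, hC'eq, add_sub_add_left_eq_sub, ← Finset.sum_sub_distrib]
    exact Finset.sum_congr rfl fun γ' _ => (sub_smul _ _ _).symm
  have hDE : DM (C - C') = MonoidAlgebra.single ((v ^ 2) ^ (-ℓI γ)) (1 : ℤ) • (C - C') := by
    rw [show DM (C - C') = DM C - DM C' from F.map_sub C C', hC, hC', smul_sub]
  choose Rc hRc using hDMtri
  have hDE2 : DM (C - C') = ∑ γ' ∈ S, (MonoidAlgebra.mapDomainRingHom ℤ D) (Q γ') •
      DM (Finsupp.single γ' (1 : MonoidAlgebra ℤ A)) := by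
    rw [hE, show DM (∑ γ' ∈ S, Q γ' • Finsupp.single γ' (1 : MonoidAlgebra ℤ A))
      = ∑ γ' ∈ S, DM (Q γ' • Finsupp.single γ' (1 : MonoidAlgebra ℤ A)) from
        map_sum F _ _]
    exact Finset.sum_congr rfl fun γ' _ => key_smul _ _
  have main : ∀ δ ∈ S, (∀ δ' ∈ S, δ < δ' → Q δ' = 0) → Q δ = 0 := by
    intro δ hδ hIH
    have hδγ : δ < γ := (Finset.mem_filter.mp hδ).2
    have h1 : (DM (C - C')) δ = MonoidAlgebra.single ((v ^ 2) ^ (-ℓI γ)) (1 : ℤ) * Q δ := by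
      rw [hDE, Finsupp.smul_apply, smul_eq_mul]
      congr 1
      rw [hE, Finsupp.finset_sum_apply, Finset.sum_eq_single δ]
      · rw [Finsupp.smul_apply, smul_eq_mul, Finsupp.single_eq_same, mul_one]
      · intro γ' _ hne
        rw [Finsupp.smul_apply, smul_eq_mul, Finsupp.single_eq_of_ne' hne, mul_zero]
      · intro h; exact absurd hδ h
    have h2 : (DM (C - C')) δ = (MonoidAlgebra.mapDomainRingHom ℤ D) (Q δ) *
        MonoidAlgebra.single ((v ^ 2) ^ (-ℓI δ)) (1 : ℤ) := by
      rw [hDE2, Finsupp.finset_sum_apply, Finset.sum_eq_single δ]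
      · rw [hRc δ, Finsupp.smul_apply, smul_eq_mul, Finsupp.smul_apply, smul_eq_mul,
          Finsupp.add_apply, Finsupp.single_eq_same, Finsupp.finset_sum_apply]
        have hz : ∑ γ'' ∈ univ.filter (fun x => x < δ),
            (Rc δ γ'' • Finsupp.single γ'' (1 : MonoidAlgebra ℤ A)) δ = 0 := by
          refine Finset.sum_eq_zero fun γ'' hγ'' => ?_
          have hlt : γ'' < δ := (Finset.mem_filter.mp hγ'').2
          rw [Finsupp.smul_apply, smul_eq_mul, Finsupp.single_eq_of_ne' hlt.ne, mul_zero]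
        rw [hz, add_zero, mul_one]
      · intro γ' hγ'S hne
        by_cases hlt : δ < γ'
        · rw [hIH γ' hγ'S hlt]
          simp
        · rw [hRc γ', Finsupp.smul_apply, smul_eq_mul, Finsupp.smul_apply, smul_eq_mul,
            Finsupp.add_apply, Finsupp.single_eq_of_ne' hne, Finsupp.finset_sum_apply]
          have hz : ∑ γ'' ∈ univ.filter (fun x => x < γ'),
              (Rc γ' γ'' • Finsupp.single γ'' (1 : MonoidAlgebra ℤ A)) δ = 0 := by
            refine Finset.sum_eq_zero fun γ'' hγ'' => ?_
            have hlt' : γ'' < γ' := (Finset.mem_filter.mp hγ'').2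
            have hne' : γ'' ≠ δ := fun h => hlt (h ▸ hlt')
            rw [Finsupp.smul_apply, smul_eq_mul, Finsupp.single_eq_of_ne' hne', mul_zero]
          rw [hz, add_zero, mul_zero, mul_zero]
      · intro h; exact absurd hδ h
    have hbound : ∀ a ∈ (Q δ).coeff.support,
        ν a ≤ (ν (v ^ 2)) ^ (((ℓI γ : ℝ) - (ℓI δ : ℝ) - 1) / 2) := by
      intro a haQ
      have := Finsupp.support_sub (f := (P δ).coeff) (g := (P' δ).coeff) haQ
      rcases Finset.mem_union.mp this with h | h
      · exact hPb δ hδγ a h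
      · exact hP'b δ hδγ a h
    exact kl_aux v D hDD ν hν hνpos hνu hνD (ℓI γ) (ℓI δ) (Q δ) hbound (h2.symm.trans h1)
  have allzero : ∀ δ ∈ S, Q δ = 0 := by
    by_contra h
    push_neg at h
    obtain ⟨δ0, hδ0, hQδ0⟩ := h
    set T := S.filter (fun δ => Q δ ≠ 0) with hT
    have hTne : T.Nonempty := ⟨δ0, Finset.mem_filter.mpr ⟨hδ0, hQδ0⟩⟩
    obtain ⟨δ, hδT, hmax⟩ : ∃ δ ∈ T, ∀ δ' ∈ T, ¬ δ < δ' := by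
      obtain ⟨δ, h⟩ := Finset.exists_maximal hTne
      exact ⟨δ, h.prop, fun δ' h' hlt => lt_irrefl _ (lt_of_lt_of_le hlt (h.2 h' hlt.le))⟩
    have hδS := (Finset.mem_filter.mp hδT).1
    have hzero : Q δ = 0 := by
      refine main δ hδS fun δ' hδ'S hlt => ?_
      by_contra hne
      exact hmax δ' (Finset.mem_filter.mpr ⟨hδ'S, hne⟩) hlt
    exact (Finset.mem_filter.mp hδT).2 hzero
  have hfinal : C - C' = 0 := by
    rw [hE]
    exact Finset.sum_eq_zero fun δ hδ => by rw [allzero δ hδ, zero_smul]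
  exact sub_eq_zero.mp hfinal
end

section
/- Let k be a field, V a k-vector space, and f: V → V a nilpotent k-linear endomorphism. For n ∈ ℤ let M_n(V,f) = Σ_{i,j ∈ ℕ, j−i=n} (range(f^i) ∩ ker(f^{j+1})), and let I_n = range(f^{−n}) for n ≤ 0 and I_n = V for n ≥ 0. Then for every n ∈ ℤ one has ker(f) ∩ I_n = ker(f) ∩ M_n(V,f). -/
/-- The explicit (Beilinson-style) formula for the monodromy weight filtration of a nilpotent
endomorphism `f`: `M n = Σ_{i,j ∈ ℕ, j - i = n} (range (f^i) ⊓ ker (f^(j+1)))`. -/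
noncomputable def monodromyFiltration {k V : Type*} [Field k] [AddCommGroup V] [Module k V]
    (f : V →ₗ[k] V) (n : ℤ) : Submodule k V :=
  ⨆ (i : ℕ) (j : ℕ) (_ : (j : ℤ) - (i : ℤ) = n),
    (LinearMap.range (f ^ i) ⊓ LinearMap.ker (f ^ (j + 1)))

/-- For a nilpotent endomorphism `f` of a vector space `V`, with
`I n = range (f^(-n))` for `n ≤ 0` and `I n = V` for `n ≥ 0`, one has
`ker f ⊓ I n = ker f ⊓ M n` for every `n : ℤ`, where `M` is the monodromy weight filtration. -/
theorem ker_inf_imageFiltration_eq_ker_inf_monodromyFiltration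
    {k V : Type*} [Field k] [AddCommGroup V] [Module k V]
    (f : V →ₗ[k] V) (hf : IsNilpotent f) (n : ℤ) :
    LinearMap.ker f ⊓ (if n < 0 then LinearMap.range (f ^ (-n).toNat) else ⊤)
      = LinearMap.ker f ⊓ monodromyFiltration f n := by
  have hker : ∀ j : ℕ, LinearMap.ker f ≤ LinearMap.ker (f ^ (j + 1)) := by
    intro j x hx
    have : f x = 0 := hx
    simp [LinearMap.mem_ker, pow_succ, Module.End.mul_apply, this]
  split_ifs with h
  · apply le_antisymm
    · rintro x ⟨hx1, hx2⟩
      refine ⟨hx1, ?_⟩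
      apply Submodule.mem_iSup_of_mem ((-n).toNat)
      apply Submodule.mem_iSup_of_mem 0
      apply Submodule.mem_iSup_of_mem (by omega)
      exact ⟨hx2, hker 0 hx1⟩
    · refine inf_le_inf_left _ ?_
      refine iSup_le fun i => iSup_le fun j => iSup_le fun hij => ?_
      refine le_trans inf_le_left ?_
      have hmi : (-n).toNat ≤ i := by omega
      rintro x ⟨y, rfl⟩
      obtain ⟨d, rfl⟩ := Nat.exists_eq_add_of_le hmi
      rw [pow_add, Module.End.mul_apply]
      exact ⟨(f ^ d) y, rfl⟩
  · refine le_antisymm ?_ (inf_le_inf_left _ le_top)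
    rintro x ⟨hx1, -⟩
    refine ⟨hx1, ?_⟩
    apply Submodule.mem_iSup_of_mem 0
    apply Submodule.mem_iSup_of_mem n.toNat
    apply Submodule.mem_iSup_of_mem (by omega)
    exact ⟨⟨x, by simp⟩, hker _ hx1⟩
end

section
/- Let k be a field, V a k-vector space, and f: V → V a nilpotent k-linear endomorphism. For n ∈ ℤ let M_n(V,f) = Σ_{i,j ∈ ℕ, j−i=n} (range(f^i) ∩ ker(f^{j+1})), and for n ≥ 0 let Gr_n^M = M_n/M_{n−1} and let P_n(V,f) ⊆ Gr_n^M be the kernel of the map Gr_n^M → Gr_{−n−2}^M induced by f^{n+1}. On the cokernel V/f(V), define J_n = image of ker(f^{n+1}) for n ≥ 0 and J_n = 0 for n < 0. Then for every n ≥ 0: the natural map M_n(V,f) → J_n/J_{n−1} is surjective and factors through a surjection Gr_n^M → J_n/J_{n−1} whose kernel is exactly the image of Gr_{n+2}^M under the map induced by f; consequently this surjection restricts to an isomorphism P_n(V,f) ≅ J_n/J_{n−1}. -/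
/-- The filtration `J` on the cokernel `V/f(V)`: for `n ≥ 0`, `J n` is the image of
`ker (f^(n+1))`, and `J n = 0` for `n < 0`. -/
noncomputable def cokerFiltration {k V : Type*} [Field k] [AddCommGroup V] [Module k V]
    (f : V →ₗ[k] V) (n : ℤ) : Submodule k (V ⧸ LinearMap.range f) :=
  if n < 0 then ⊥
  else Submodule.map (LinearMap.range f).mkQ (LinearMap.ker (f ^ (n.toNat + 1)))

namespace PrimAux

variable {k V : Type*} [Field k] [AddCommGroup V] [Module k V] (f : V →ₗ[k] V)

lemma ker_pow_mono {a b : ℕ} (h : a ≤ b) : LinearMap.ker (f ^ a) ≤ LinearMap.ker (f ^ b) := by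
  intro x hx
  rw [LinearMap.mem_ker] at hx ⊢
  have hb : b - a + a = b := by omega
  rw [← hb, pow_add, Module.End.mul_apply, hx, map_zero]

lemma range_pow_anti {a b : ℕ} (h : a ≤ b) :
    LinearMap.range (f ^ b) ≤ LinearMap.range (f ^ a) := by
  rintro x ⟨u, rfl⟩
  refine ⟨(f ^ (b - a)) u, ?_⟩
  have hb : a + (b - a) = b := by omega
  rw [← Module.End.mul_apply, ← pow_add, hb]

lemma gen_le {n : ℤ} (i j : ℕ) (h : (j : ℤ) - (i : ℤ) = n) :
    LinearMap.range (f ^ i) ⊓ LinearMap.ker (f ^ (j + 1)) ≤ monodromyFiltration f n :=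
  le_iSup_of_le i (le_iSup_of_le j (le_iSup_of_le h le_rfl))

lemma filt_le {n : ℤ} {T : Submodule k V}
    (hT : ∀ i j : ℕ, (j : ℤ) - (i : ℤ) = n →
      LinearMap.range (f ^ i) ⊓ LinearMap.ker (f ^ (j + 1)) ≤ T) :
    monodromyFiltration f n ≤ T :=
  iSup_le fun i => iSup_le fun j => iSup_le fun h => hT i j h

lemma filt_mono {m n : ℤ} (h : m ≤ n) :
    monodromyFiltration f m ≤ monodromyFiltration f n := by
  refine filt_le f fun i j hij => ?_
  refine le_trans (inf_le_inf_left _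
    (ker_pow_mono f (a := j + 1) (b := j + (n - m).toNat + 1) (by omega)))
    (gen_le f i (j + (n - m).toNat) (by omega))

lemma map_pow_filt_le (a : ℕ) (n : ℤ) :
    Submodule.map (f ^ a) (monodromyFiltration f n) ≤ monodromyFiltration f (n - 2 * a) := by
  rw [Submodule.map_le_iff_le_comap]
  refine filt_le f fun i j hij => ?_
  rintro x ⟨⟨u, rfl⟩, hker⟩
  rw [SetLike.mem_coe, LinearMap.mem_ker] at hker
  simp only [Submodule.mem_comap]
  by_cases hle : a ≤ j
  · refine gen_le f (i + a) (j - a) (by omega) ⟨⟨u, ?_⟩, ?_⟩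
    · rw [← Module.End.mul_apply, ← pow_add, Nat.add_comm i a]
    · rw [SetLike.mem_coe, LinearMap.mem_ker, ← Module.End.mul_apply, ← pow_add]
      have h2 : j - a + 1 + a = j + 1 := by omega
      rw [h2, hker]
  · have hz : (f ^ a) ((f ^ i) u) = 0 := by
      have h2 : a - (j + 1) + (j + 1) = a := by omega
      rw [← h2, pow_add, Module.End.mul_apply, hker, map_zero]
    rw [hz]
    exact zero_mem _

lemma filt_le_map_pow (a : ℕ) (c : ℤ) (hc : c ≤ -(a : ℤ)) :
    monodromyFiltration f c ≤ Submodule.map (f ^ a) (monodromyFiltration f (c + 2 * a)) := by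
  refine filt_le f fun i j hij => ?_
  rintro x ⟨⟨u, rfl⟩, hker⟩
  rw [SetLike.mem_coe, LinearMap.mem_ker] at hker
  have hia : a ≤ i := by omega
  refine ⟨(f ^ (i - a)) u, ?_, ?_⟩
  · refine gen_le f (i - a) (j + a) (by omega) ⟨⟨u, rfl⟩, ?_⟩
    rw [SetLike.mem_coe, LinearMap.mem_ker, ← Module.End.mul_apply, ← pow_add]
    have h2 : j + a + 1 + (i - a) = (j + 1) + i := by omega
    rw [h2, pow_add, Module.End.mul_apply, hker]
  · rw [← Module.End.mul_apply, ← pow_add]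
    have h2 : a + (i - a) = i := by omega
    rw [h2]

lemma ker_le_filt (m : ℕ) : LinearMap.ker (f ^ (m + 1)) ≤ monodromyFiltration f (m : ℤ) := by
  refine le_trans (le_inf ?_ le_rfl) (gen_le f 0 m (by omega))
  intro x _
  exact ⟨x, by rw [pow_zero, Module.End.one_apply]⟩

lemma ker_le_filt' (m : ℕ) : LinearMap.ker (f ^ m) ≤ monodromyFiltration f ((m : ℤ) - 1) := by
  cases m with
  | zero =>
      intro x hx
      rw [pow_zero, LinearMap.mem_ker, Module.End.one_apply] at hx
      rw [hx]
      exact zero_mem _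
  | succ m =>
      have h := ker_le_filt f m
      have hc : ((m + 1 : ℕ) : ℤ) - 1 = (m : ℤ) := by push_cast; omega
      rw [hc]
      exact h

lemma filt_le_range (c : ℤ) (hc : c < 0) : monodromyFiltration f c ≤ LinearMap.range f := by
  refine filt_le f fun i j hij => ?_
  refine le_trans inf_le_left (le_trans (range_pow_anti f (a := 1) (by omega)) ?_)
  rw [pow_one]

lemma filt_le_ker_sup_range (n : ℕ) :
    monodromyFiltration f ((n : ℤ) - 1) ≤ LinearMap.ker (f ^ n) ⊔ LinearMap.range f := by
  refine filt_le f fun i j hij => ?_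
  rcases Nat.eq_zero_or_pos i with hi | hi
  · subst hi
    have hj : j + 1 = n := by omega
    rw [hj]
    exact le_trans inf_le_right le_sup_left
  · refine le_trans inf_le_left (le_trans (range_pow_anti f (a := 1) hi) ?_)
    rw [pow_one]
    exact le_sup_right

lemma map_mkQ_range :
    Submodule.map (LinearMap.range f).mkQ (LinearMap.range f) = ⊥ := by
  rw [eq_bot_iff]
  rintro x ⟨y, hy, rfl⟩
  simpa [Submodule.mem_bot, Submodule.Quotient.mk_eq_zero] using hy

lemma coker_eq_of_nonneg (z : ℤ) (hz : 0 ≤ z) :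
    cokerFiltration f z
      = Submodule.map (LinearMap.range f).mkQ (LinearMap.ker (f ^ (z.toNat + 1))) := by
  rw [cokerFiltration, if_neg (by omega)]

lemma coker_nat (n : ℕ) :
    cokerFiltration f (n : ℤ)
      = Submodule.map (LinearMap.range f).mkQ (LinearMap.ker (f ^ (n + 1))) := by
  rw [coker_eq_of_nonneg f _ (by omega)]
  norm_num

lemma comap_coker (n : ℕ) :
    Submodule.comap (LinearMap.range f).mkQ (cokerFiltration f ((n : ℤ) - 1))
      = LinearMap.ker (f ^ n) ⊔ LinearMap.range f := by
  cases n with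
  | zero =>
      rw [cokerFiltration, if_pos (by omega), Submodule.comap_bot, Submodule.ker_mkQ,
        pow_zero, Module.End.one_eq_id, LinearMap.ker_id, bot_sup_eq]
  | succ m =>
      rw [cokerFiltration, if_neg (by push_cast; omega), Submodule.comap_map_eq,
        Submodule.ker_mkQ]
      have he : (((m + 1 : ℕ) : ℤ) - 1).toNat = m := by omega
      rw [he]

lemma map_filt_le_coker (z : ℤ) :
    Submodule.map (LinearMap.range f).mkQ (monodromyFiltration f z) ≤ cokerFiltration f z := by
  rcases lt_or_ge z 0 with hz | hz
  · rw [cokerFiltration, if_pos hz, ← map_mkQ_range f]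
    exact Submodule.map_mono (filt_le_range f z hz)
  · rw [coker_eq_of_nonneg f z hz]
    have h1 : monodromyFiltration f z
        ≤ LinearMap.ker (f ^ (z.toNat + 1)) ⊔ LinearMap.range f := by
      have h := filt_le_ker_sup_range f (z.toNat + 1)
      have hz2 : ((z.toNat + 1 : ℕ) : ℤ) - 1 = z := by omega
      rwa [hz2] at h
    refine le_trans (Submodule.map_mono h1) ?_
    rw [Submodule.map_sup, map_mkQ_range, sup_bot_eq]


lemma range_inf_filt (hf : IsNilpotent f) (n : ℕ) :
    monodromyFiltration f (n : ℤ) ⊓ LinearMap.range f ≤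
      Submodule.map f (monodromyFiltration f ((n : ℤ) + 2)) := by
  obtain ⟨e, he⟩ := hf
  have claim : ∀ m : ℕ, ∀ w : V, w ∈ monodromyFiltration f ((n : ℤ) + 2 + (m : ℤ)) →
      f w ∈ monodromyFiltration f (n : ℤ) →
      f w ∈ Submodule.map f (monodromyFiltration f ((n : ℤ) + 2)) := by
    intro m
    induction m with
    | zero =>
        intro w hw _
        exact ⟨w, by simpa using hw, rfl⟩
    | succ m ih =>
        intro w hw hfw
        set a : ℕ := n + 3 + m with ha
        have hwa : w ∈ monodromyFiltration f (a : ℤ) := by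
          have hc : (n : ℤ) + 2 + ((m + 1 : ℕ) : ℤ) = (a : ℤ) := by push_cast; omega
          rwa [hc] at hw
        have h2 : (f ^ a) w = (f ^ (a - 1)) (f w) := by
          conv_lhs => rw [show a = (a - 1) + 1 by omega]
          rw [pow_succ, Module.End.mul_apply]
        have h1 : (f ^ a) w ∈ monodromyFiltration f (-(a : ℤ) - 1) := by
          have h3 : (f ^ (a - 1)) (f w)
              ∈ monodromyFiltration f ((n : ℤ) - 2 * ((a - 1 : ℕ) : ℤ)) :=
            map_pow_filt_le f (a - 1) (n : ℤ) ⟨f w, hfw, rfl⟩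
          rw [h2]
          exact filt_mono f (by omega) h3
        have h4 := filt_le_map_pow f a (-(a : ℤ) - 1) (by omega) h1
        have hidx : -(a : ℤ) - 1 + 2 * (a : ℤ) = (a : ℤ) - 1 := by ring
        rw [hidx] at h4
        obtain ⟨y, hy, hye⟩ := h4
        have h5 : w - y ∈ LinearMap.ker (f ^ a) := by
          rw [LinearMap.mem_ker, map_sub, hye, sub_self]
        have h6 : w ∈ monodromyFiltration f ((a : ℤ) - 1) := by
          have h7 := ker_le_filt' f a h5
          have h8 := add_mem h7 (hy : y ∈ monodromyFiltration f ((a : ℤ) - 1))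
          simpa using h8
        refine ih w ?_ hfw
        have hc : (a : ℤ) - 1 = (n : ℤ) + 2 + (m : ℤ) := by omega
        rwa [hc] at h6
  rintro x ⟨hxM, w, rfl⟩
  refine claim e w ?_ hxM
  have hker : w ∈ LinearMap.ker (f ^ (n + 2 + e + 1)) := by
    rw [LinearMap.mem_ker]
    have hb : n + 2 + e + 1 = n + 3 + e := by omega
    rw [hb, pow_add, Module.End.mul_apply, he, LinearMap.zero_apply, map_zero]
  have h := ker_le_filt f (n + 2 + e) hker
  have hc : ((n + 2 + e : ℕ) : ℤ) = (n : ℤ) + 2 + (e : ℤ) := by push_cast; omega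
  rwa [hc] at h

lemma part3 (hf : IsNilpotent f) (n : ℕ) :
    monodromyFiltration f (n : ℤ)
        ⊓ Submodule.comap (LinearMap.range f).mkQ (cokerFiltration f ((n : ℤ) - 1))
      = Submodule.map f (monodromyFiltration f ((n : ℤ) + 2))
          ⊔ monodromyFiltration f ((n : ℤ) - 1) := by
  apply le_antisymm
  · rintro x ⟨hxM, hxc⟩
    have hxk : x ∈ LinearMap.ker (f ^ n) ⊔ LinearMap.range f := by
      rw [← comap_coker f n]
      exact hxc
    rw [Submodule.mem_sup] at hxk
    obtain ⟨y, hy, r, hr, hyr⟩ := hxk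
    have hyM : y ∈ monodromyFiltration f ((n : ℤ) - 1) := ker_le_filt' f n hy
    have hrM : r ∈ monodromyFiltration f (n : ℤ) := by
      have : r = x - y := by rw [← hyr]; abel
      rw [this]
      exact sub_mem hxM (filt_mono f (by omega) hyM)
    have hrmap := range_inf_filt f hf n ⟨hrM, hr⟩
    refine Submodule.mem_sup.mpr ⟨r, hrmap, y, hyM, ?_⟩
    rw [add_comm]
    exact hyr
  · refine sup_le (le_inf ?_ ?_) (le_inf (filt_mono f (by omega)) ?_)
    · have h := map_pow_filt_le f 1 ((n : ℤ) + 2)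
      rw [pow_one] at h
      have hidx : (n : ℤ) + 2 - 2 * ((1 : ℕ) : ℤ) = (n : ℤ) := by push_cast; omega
      rwa [hidx] at h
    · rw [← Submodule.map_le_iff_le_comap]
      refine le_trans (Submodule.map_mono ?_)
        (le_trans (le_of_eq (map_mkQ_range f)) bot_le)
      rintro x ⟨w, _, rfl⟩
      exact ⟨w, rfl⟩
    · rw [← Submodule.map_le_iff_le_comap]
      exact map_filt_le_coker f _

lemma inj_chase (hf : IsNilpotent f) (n : ℕ) (x : V)
    (hx : x ∈ monodromyFiltration f (n : ℤ))
    (hker : x ∈ Submodule.comap (LinearMap.range f).mkQ (cokerFiltration f ((n : ℤ) - 1)))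
    (hprim : (f ^ (n + 1)) x ∈ monodromyFiltration f (-(n : ℤ) - 3)) :
    x ∈ monodromyFiltration f ((n : ℤ) - 1) := by
  have h3 : x ∈ Submodule.map f (monodromyFiltration f ((n : ℤ) + 2))
      ⊔ monodromyFiltration f ((n : ℤ) - 1) := by
    rw [← part3 f hf n]
    exact ⟨hx, hker⟩
  rw [Submodule.mem_sup] at h3
  obtain ⟨u, hu, z, hz, huz⟩ := h3
  obtain ⟨w, hw, rfl⟩ := hu
  have hz' : (f ^ (n + 1)) z ∈ monodromyFiltration f (-(n : ℤ) - 3) := by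
    have h := map_pow_filt_le f (n + 1) ((n : ℤ) - 1) ⟨z, hz, rfl⟩
    have hidx : (n : ℤ) - 1 - 2 * ((n + 1 : ℕ) : ℤ) = -(n : ℤ) - 3 := by push_cast; omega
    rwa [hidx] at h
  have hfw : (f ^ (n + 2)) w ∈ monodromyFiltration f (-(n : ℤ) - 3) := by
    have he : (f ^ (n + 2)) w = (f ^ (n + 1)) (f w) := by
      rw [show n + 2 = (n + 1) + 1 from rfl, pow_succ, Module.End.mul_apply]
    have hsum : (f ^ (n + 2)) w = (f ^ (n + 1)) x - (f ^ (n + 1)) z := by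
      rw [he, ← huz, map_add]
      abel
    rw [hsum]
    exact sub_mem hprim hz'
  have h4 := filt_le_map_pow f (n + 2) (-(n : ℤ) - 3) (by push_cast; omega) hfw
  have hidx2 : -(n : ℤ) - 3 + 2 * ((n + 2 : ℕ) : ℤ) = (n : ℤ) + 1 := by push_cast; omega
  rw [hidx2] at h4
  obtain ⟨y, hy, hye⟩ := h4
  have h5 : w - y ∈ LinearMap.ker (f ^ (n + 2)) := by
    rw [LinearMap.mem_ker, map_sub, hye, sub_self]
  have h6 : w ∈ monodromyFiltration f ((n : ℤ) + 1) := by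
    have h7 := ker_le_filt f (n + 1) h5
    have hidx3 : ((n + 1 : ℕ) : ℤ) = (n : ℤ) + 1 := by push_cast; omega
    rw [hidx3] at h7
    have h8 := add_mem h7 (hy : y ∈ monodromyFiltration f ((n : ℤ) + 1))
    simpa using h8
  have h8 : f w ∈ monodromyFiltration f ((n : ℤ) - 1) := by
    have h := map_pow_filt_le f 1 ((n : ℤ) + 1) ⟨w, h6, rfl⟩
    rw [pow_one] at h
    have hidx4 : (n : ℤ) + 1 - 2 * ((1 : ℕ) : ℤ) = (n : ℤ) - 1 := by push_cast; omega
    rwa [hidx4] at h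
  rw [← huz]
  exact add_mem h8 hz

end PrimAux


/-- Let `f` be a nilpotent endomorphism of a vector space `V`, `M` its
monodromy weight filtration, `Gr_n^M = M n / M (n-1)`, `P_n ⊆ Gr_n^M` the kernel of the map
`Gr_n^M → Gr_{-n-2}^M` induced by `f^(n+1)`, and `J` the filtration on `V/f(V)` by images of
the kernels of powers of `f`.  Then for every `n ≥ 0`: the natural map
`M n → J n / J (n-1)` is surjective, it factors through a surjection
`Gr_n^M → J n / J (n-1)` whose kernel is exactly the image of `Gr_{n+2}^M` under the map
induced by `f`; consequently this surjection restricts to an isomorphism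
`P_n ≅ J n / J (n-1)`. -/
theorem primitivePart_iso_jantzen_graded
    {k V : Type*} [Field k] [AddCommGroup V] [Module k V]
    (f : V →ₗ[k] V) (hf : IsNilpotent f) (n : ℕ) :
    -- the natural map `M n → J n / J (n-1)` is well defined and surjective:
    (Submodule.map (LinearMap.range f).mkQ (monodromyFiltration f n)
        ≤ cokerFiltration f n
      ∧ cokerFiltration f n
        ≤ Submodule.map (LinearMap.range f).mkQ (monodromyFiltration f n)
            ⊔ cokerFiltration f ((n : ℤ) - 1))
    -- it factors through `Gr_n^M` (i.e. `M (n-1)` is sent into `J (n-1)`):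
    ∧ Submodule.map (LinearMap.range f).mkQ (monodromyFiltration f ((n : ℤ) - 1))
        ≤ cokerFiltration f ((n : ℤ) - 1)
    -- the kernel of `Gr_n^M → J n / J (n-1)` is exactly the image of `Gr_{n+2}^M` under
    -- the map induced by `f`:
    ∧ monodromyFiltration f n
        ⊓ Submodule.comap (LinearMap.range f).mkQ (cokerFiltration f ((n : ℤ) - 1))
      = Submodule.map f (monodromyFiltration f ((n : ℤ) + 2))
          ⊔ monodromyFiltration f ((n : ℤ) - 1)
    -- the induced surjection restricts to an isomorphism `P_n ≅ J n / J (n-1)`: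
    ∧ ∀ (g : (↥(monodromyFiltration f n) ⧸
            Submodule.comap (monodromyFiltration f (n : ℤ)).subtype
              (monodromyFiltration f ((n : ℤ) - 1))) →ₗ[k]
          (↥(monodromyFiltration f (-(n : ℤ) - 2)) ⧸
            Submodule.comap (monodromyFiltration f (-(n : ℤ) - 2)).subtype
              (monodromyFiltration f (-(n : ℤ) - 3)))),
        -- `g` is the map `Gr_n^M → Gr_{-n-2}^M` induced by `f^(n+1)`:
        (∀ (x : V) (hx : x ∈ monodromyFiltration f (n : ℤ))
            (hfx : (f ^ (n + 1)) x ∈ monodromyFiltration f (-(n : ℤ) - 2)),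
          g (Submodule.Quotient.mk ⟨x, hx⟩)
            = Submodule.Quotient.mk ⟨(f ^ (n + 1)) x, hfx⟩) →
      ∀ (q : (↥(monodromyFiltration f n) ⧸
            Submodule.comap (monodromyFiltration f (n : ℤ)).subtype
              (monodromyFiltration f ((n : ℤ) - 1))) →ₗ[k]
          (↥(cokerFiltration f n) ⧸
            Submodule.comap (cokerFiltration f (n : ℤ)).subtype
              (cokerFiltration f ((n : ℤ) - 1)))),
        -- `q` is the map `Gr_n^M → J n / J (n-1)` induced by the projection `V → V/f(V)`:
        (∀ (x : V) (hx : x ∈ monodromyFiltration f (n : ℤ))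
            (hpx : (LinearMap.range f).mkQ x ∈ cokerFiltration f (n : ℤ)),
          q (Submodule.Quotient.mk ⟨x, hx⟩)
            = Submodule.Quotient.mk ⟨(LinearMap.range f).mkQ x, hpx⟩) →
        Function.Bijective (q.comp (LinearMap.ker g).subtype) := by
  have h1a : Submodule.map (LinearMap.range f).mkQ (monodromyFiltration f (n : ℤ))
      ≤ cokerFiltration f (n : ℤ) := PrimAux.map_filt_le_coker f (n : ℤ)
  refine ⟨⟨h1a, ?_⟩, PrimAux.map_filt_le_coker f ((n : ℤ) - 1), PrimAux.part3 f hf n, ?_⟩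
  · rw [PrimAux.coker_nat f n]
    exact le_trans (Submodule.map_mono (PrimAux.ker_le_filt f n)) le_sup_left
  intro g hg q hq
  -- membership of f^(n+1) x in M(-n-2) for x ∈ M n
  have hmem2 : ∀ x : V, x ∈ monodromyFiltration f (n : ℤ) →
      (f ^ (n + 1)) x ∈ monodromyFiltration f (-(n : ℤ) - 2) := by
    intro x hx
    have h := PrimAux.map_pow_filt_le f (n + 1) (n : ℤ) ⟨x, hx, rfl⟩
    have hidx : (n : ℤ) - 2 * ((n + 1 : ℕ) : ℤ) = -(n : ℤ) - 2 := by push_cast; omega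
    rwa [hidx] at h
  constructor
  · -- injectivity
    have hinj0 : ∀ u : ↥(LinearMap.ker g),
        (q.comp (LinearMap.ker g).subtype) u = 0 → u = 0 := by
      rintro ⟨ξ, hξ⟩ hq0
      obtain ⟨x', rfl⟩ := Submodule.Quotient.mk_surjective _ ξ
      obtain ⟨x, hx⟩ := x'
      rw [LinearMap.mem_ker] at hξ
      have hpx : (LinearMap.range f).mkQ x ∈ cokerFiltration f (n : ℤ) :=
        h1a (Submodule.mem_map_of_mem hx)
      have hq1 : q (Submodule.Quotient.mk ⟨x, hx⟩) = 0 := by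
        simpa using hq0
      rw [hq x hx hpx, Submodule.Quotient.mk_eq_zero, Submodule.mem_comap,
        Submodule.subtype_apply] at hq1
      rw [hg x hx (hmem2 x hx), Submodule.Quotient.mk_eq_zero, Submodule.mem_comap,
        Submodule.subtype_apply] at hξ
      have hxm := PrimAux.inj_chase f hf n x hx (Submodule.mem_comap.mpr hq1) hξ
      have hmk : (Submodule.Quotient.mk ⟨x, hx⟩ :
          ↥(monodromyFiltration f (n : ℤ)) ⧸
            Submodule.comap (monodromyFiltration f (n : ℤ)).subtype
              (monodromyFiltration f ((n : ℤ) - 1))) = 0 := by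
        rw [Submodule.Quotient.mk_eq_zero, Submodule.mem_comap, Submodule.subtype_apply]
        exact hxm
      exact Subtype.ext hmk
    intro a b hab
    have h0 : (q.comp (LinearMap.ker g).subtype) (a - b) = 0 := by
      rw [map_sub, hab, sub_self]
    have := hinj0 (a - b) h0
    exact sub_eq_zero.mp this
  · -- surjectivity
    intro η
    obtain ⟨t', rfl⟩ := Submodule.Quotient.mk_surjective _ η
    obtain ⟨t, ht⟩ := t'
    have ht' : t ∈ Submodule.map (LinearMap.range f).mkQ (LinearMap.ker (f ^ (n + 1))) := by
      rw [← PrimAux.coker_nat f n]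
      exact ht
    obtain ⟨x, hxker, hxt⟩ := ht'
    have hx : x ∈ monodromyFiltration f (n : ℤ) := PrimAux.ker_le_filt f n hxker
    have hx0 : (f ^ (n + 1)) x = 0 := hxker
    have hgz : g (Submodule.Quotient.mk ⟨x, hx⟩) = 0 := by
      rw [hg x hx (hmem2 x hx), Submodule.Quotient.mk_eq_zero, Submodule.mem_comap,
        Submodule.subtype_apply]
      show (f ^ (n + 1)) x ∈ monodromyFiltration f (-(n : ℤ) - 3)
      rw [hx0]
      exact zero_mem _
    refine ⟨⟨Submodule.Quotient.mk ⟨x, hx⟩, LinearMap.mem_ker.mpr hgz⟩, ?_⟩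
    have hpx : (LinearMap.range f).mkQ x ∈ cokerFiltration f (n : ℤ) :=
      h1a (Submodule.mem_map_of_mem hx)
    have heq : (⟨(LinearMap.range f).mkQ x, hpx⟩ : ↥(cokerFiltration f (n : ℤ)))
        = ⟨t, ht⟩ := Subtype.ext hxt
    show q (Submodule.Quotient.mk ⟨x, hx⟩) = Submodule.Quotient.mk ⟨t, ht⟩
    rw [hq x hx hpx, heq]
end

section
/- Let k be a field, V a k-vector space, and f: V → V a nilpotent k-linear endomorphism. For n ∈ ℤ let M_n(V,f) = Σ_{i,j ∈ ℕ, j−i=n} (range(f^i) ∩ ker(f^{j+1})), and for n ≥ 0 let Gr_n^M = M_n/M_{n−1} and let P_n(V,f) ⊆ Gr_n^M be the kernel of the map Gr_n^M → Gr_{−n−2}^M induced by f^{n+1}. Let V̄ = V/ker(f) with the induced nilpotent endomorphism f̄. Then for every n ≥ 1: (a) the quotient map V → V̄ maps M_n(V,f) onto M_{n−1}(V̄,f̄); and (b) the induced map Gr_n^M(V,f) → Gr_{n−1}^M(V̄,f̄) restricts to an isomorphism P_n(V,f) ≅ P_{n−1}(V̄,f̄). -/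
section helpers

variable {k V : Type*} [Field k] [AddCommGroup V] [Module k V] (f : V →ₗ[k] V)

lemma mf_term_le {n : ℤ} {i j : ℕ} (h : (j : ℤ) - (i : ℤ) = n) :
    LinearMap.range (f ^ i) ⊓ LinearMap.ker (f ^ (j + 1)) ≤ monodromyFiltration f n :=
  le_iSup_of_le i (le_iSup_of_le j (le_iSup_of_le h le_rfl))

lemma mf_le {n : ℤ} {S : Submodule k V}
    (h : ∀ i j : ℕ, (j : ℤ) - (i : ℤ) = n →
      LinearMap.range (f ^ i) ⊓ LinearMap.ker (f ^ (j + 1)) ≤ S) :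
    monodromyFiltration f n ≤ S :=
  iSup_le fun i => iSup_le fun j => iSup_le fun hij => h i j hij

lemma ker_pow_mono {a b : ℕ} (h : a ≤ b) :
    LinearMap.ker (f ^ a) ≤ LinearMap.ker (f ^ b) := by
  intro x hx
  rw [LinearMap.mem_ker] at hx ⊢
  have : f ^ b = f ^ (b - a) * f ^ a := by rw [← pow_add, Nat.sub_add_cancel h]
  rw [this, Module.End.mul_apply, hx, map_zero]

lemma mf_mono {m n : ℤ} (h : m ≤ n) :
    monodromyFiltration f m ≤ monodromyFiltration f n := by
  apply mf_le
  intro i j hij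
  refine le_trans ?_ (mf_term_le f (i := i) (j := j + (n - m).toNat) ?_)
  · exact inf_le_inf le_rfl (ker_pow_mono f (by omega))
  · have := Int.toNat_of_nonneg (show (0:ℤ) ≤ n - m by omega)
    push_cast
    omega

lemma mf_ker_le : LinearMap.ker f ≤ monodromyFiltration f 0 := by
  intro x hx
  refine mf_term_le f (i := 0) (j := 0) (by simp) ⟨⟨x, by simp⟩, ?_⟩
  simpa [pow_one] using hx

lemma mf_map_le {m : ℤ} :
    Submodule.map f (monodromyFiltration f m) ≤ monodromyFiltration f (m - 2) := by
  rw [Submodule.map_le_iff_le_comap]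
  apply mf_le
  intro i j hij
  rintro x ⟨⟨a, ha⟩, hker⟩
  rw [SetLike.mem_coe, LinearMap.mem_ker] at hker
  rw [Submodule.mem_comap]
  cases j with
  | zero =>
    have : f x = 0 := by simpa [pow_one] using hker
    rw [this]; exact Submodule.zero_mem _
  | succ j =>
    refine mf_term_le f (i := i + 1) (j := j) (by push_cast at hij ⊢; omega) ⟨⟨a, ?_⟩, ?_⟩
    · rw [pow_succ', Module.End.mul_apply, ha]
    · rw [SetLike.mem_coe, LinearMap.mem_ker, ← Module.End.mul_apply, ← pow_succ]
      exact hker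

lemma mf_pow_mem (t : ℕ) {m : ℤ} {x : V} (hx : x ∈ monodromyFiltration f m) :
    (f ^ t) x ∈ monodromyFiltration f (m - 2 * t) := by
  induction t with
  | zero => simpa using hx
  | succ t ih =>
    have h1 : f ((f ^ t) x) ∈ monodromyFiltration f (m - 2 * t - 2) :=
      mf_map_le f (Submodule.mem_map_of_mem ih)
    have h2 : (f ^ (t + 1)) x = f ((f ^ t) x) := by
      rw [pow_succ', Module.End.mul_apply]
    rw [h2]
    exact mf_mono f (by push_cast; omega) h1

lemma mf_neg_le_map {m : ℤ} (hm : m ≤ -1) :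
    monodromyFiltration f m ≤ Submodule.map f (monodromyFiltration f (m + 2)) := by
  apply mf_le
  intro i j hij
  rintro x ⟨⟨a, ha⟩, hker⟩
  rw [SetLike.mem_coe, LinearMap.mem_ker] at hker
  obtain ⟨i', rfl⟩ : ∃ i', i = i' + 1 := ⟨i - 1, by omega⟩
  refine Submodule.mem_map.mpr ⟨(f ^ i') a, ?_, ?_⟩
  · refine mf_term_le f (i := i') (j := j + 1) (by push_cast at hij ⊢; omega) ⟨⟨a, rfl⟩, ?_⟩
    rw [SetLike.mem_coe, LinearMap.mem_ker]
    have : (f ^ (j + 1 + 1)) ((f ^ i') a) = (f ^ (j + 1)) (f ((f ^ i') a)) := by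
      rw [pow_succ, Module.End.mul_apply]
    rw [this, ← Module.End.mul_apply f (f ^ i') a, ← pow_succ', ha]
    exact hker
  · rw [← Module.End.mul_apply, ← pow_succ', ha]

variable (fbar : (V ⧸ LinearMap.ker f) →ₗ[k] (V ⧸ LinearMap.ker f))

lemma fbar_pow (hfbar : ∀ x : V, fbar ((LinearMap.ker f).mkQ x) = (LinearMap.ker f).mkQ (f x))
    (t : ℕ) (x : V) :
    (fbar ^ t) ((LinearMap.ker f).mkQ x) = (LinearMap.ker f).mkQ ((f ^ t) x) := by
  induction t with
  | zero => simp
  | succ t ih =>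
    rw [pow_succ', Module.End.mul_apply, ih, hfbar, ← Module.End.mul_apply f (f ^ t) x, ← pow_succ']

lemma mf_part_a (hfbar : ∀ x : V, fbar ((LinearMap.ker f).mkQ x) = (LinearMap.ker f).mkQ (f x))
    (m : ℤ) :
    Submodule.map (LinearMap.ker f).mkQ (monodromyFiltration f m)
      = monodromyFiltration fbar (m - 1) := by
  apply le_antisymm
  · rw [Submodule.map_le_iff_le_comap]
    apply mf_le
    intro i j hij
    rintro x ⟨⟨a, ha⟩, hker⟩
    rw [SetLike.mem_coe, LinearMap.mem_ker] at hker
    rw [Submodule.mem_comap]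
    cases j with
    | zero =>
      have hx : x ∈ LinearMap.ker f := by simpa [pow_one] using hker
      have h0 : (LinearMap.ker f).mkQ x = 0 := by
        rw [Submodule.mkQ_apply, Submodule.Quotient.mk_eq_zero]; exact hx
      rw [h0]; exact Submodule.zero_mem _
    | succ j =>
      refine mf_term_le fbar (i := i) (j := j) (by push_cast at hij ⊢; omega)
        ⟨⟨(LinearMap.ker f).mkQ a, ?_⟩, ?_⟩
      · rw [fbar_pow f fbar hfbar, ha]
      · rw [SetLike.mem_coe, LinearMap.mem_ker, fbar_pow f fbar hfbar, Submodule.mkQ_apply,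
          Submodule.Quotient.mk_eq_zero, LinearMap.mem_ker,
          ← Module.End.mul_apply f (f ^ (j + 1)) x, ← pow_succ']
        exact hker
  · apply mf_le
    intro i j hij
    rintro y ⟨⟨ab, hab⟩, hker⟩
    rw [SetLike.mem_coe, LinearMap.mem_ker] at hker
    obtain ⟨a, rfl⟩ := Submodule.mkQ_surjective _ ab
    refine Submodule.mem_map.mpr ⟨(f ^ i) a, ?_, by rw [← hab, fbar_pow f fbar hfbar]⟩
    refine mf_term_le f (i := i) (j := j + 1) (by push_cast at hij ⊢; omega) ⟨⟨a, rfl⟩, ?_⟩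
    rw [SetLike.mem_coe, LinearMap.mem_ker]
    have h2 : (LinearMap.ker f).mkQ ((f ^ i) a) = y := by
      rw [← hab, fbar_pow f fbar hfbar]
    have h1 : (f ^ (j + 1)) ((f ^ i) a) ∈ LinearMap.ker f := by
      rw [← Submodule.Quotient.mk_eq_zero (LinearMap.ker f), ← Submodule.mkQ_apply,
        ← fbar_pow f fbar hfbar, h2]
      exact hker
    have h3 := LinearMap.mem_ker.mp h1
    rw [← Module.End.mul_apply f (f ^ (j + 1)) ((f ^ i) a), ← pow_succ'] at h3
    exact h3

end helpers

/-- Let `f` be a nilpotent endomorphism of a vector space `V`, `M` its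
monodromy weight filtration, `Gr_n^M = M n / M (n-1)` and `P_n ⊆ Gr_n^M` the kernel of the
map `Gr_n^M → Gr_{-n-2}^M` induced by `f^(n+1)`.  Let `V̄ = V / ker f` with induced nilpotent
endomorphism `f̄`.  Then for every `n ≥ 1`: (a) the quotient map `V → V̄` maps `M_n(V,f)`
onto `M_{n-1}(V̄,f̄)`; and (b) the induced map `Gr_n^M(V,f) → Gr_{n-1}^M(V̄,f̄)` restricts to
an isomorphism `P_n(V,f) ≅ P_{n-1}(V̄,f̄)`. -/
theorem primitivePart_quotient_iso
    {k V : Type*} [Field k] [AddCommGroup V] [Module k V]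
    (f : V →ₗ[k] V) (hf : IsNilpotent f) (n : ℕ) (hn : 1 ≤ n)
    (fbar : (V ⧸ LinearMap.ker f) →ₗ[k] (V ⧸ LinearMap.ker f))
    (hfbar : ∀ x : V, fbar ((LinearMap.ker f).mkQ x) = (LinearMap.ker f).mkQ (f x)) :
    -- (a) the quotient map sends `M n` onto `M̄ (n-1)`:
    Submodule.map (LinearMap.ker f).mkQ (monodromyFiltration f n)
        = monodromyFiltration fbar ((n : ℤ) - 1)
    -- (b) the induced map `Gr_n^M(V,f) → Gr_{n-1}^M(V̄,f̄)` restricts to an isomorphism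
    -- `P_n(V,f) ≅ P_{n-1}(V̄,f̄)`:
    ∧ ∀ (g : (↥(monodromyFiltration f n) ⧸
            Submodule.comap (monodromyFiltration f (n : ℤ)).subtype
              (monodromyFiltration f ((n : ℤ) - 1))) →ₗ[k]
          (↥(monodromyFiltration f (-(n : ℤ) - 2)) ⧸
            Submodule.comap (monodromyFiltration f (-(n : ℤ) - 2)).subtype
              (monodromyFiltration f (-(n : ℤ) - 3)))),
        -- `g` is the map `Gr_n^M(V,f) → Gr_{-n-2}^M(V,f)` induced by `f^(n+1)`:
        (∀ (x : V) (hx : x ∈ monodromyFiltration f (n : ℤ))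
            (hfx : (f ^ (n + 1)) x ∈ monodromyFiltration f (-(n : ℤ) - 2)),
          g (Submodule.Quotient.mk ⟨x, hx⟩)
            = Submodule.Quotient.mk ⟨(f ^ (n + 1)) x, hfx⟩) →
      ∀ (gbar : (↥(monodromyFiltration fbar ((n : ℤ) - 1)) ⧸
            Submodule.comap (monodromyFiltration fbar ((n : ℤ) - 1)).subtype
              (monodromyFiltration fbar ((n : ℤ) - 2))) →ₗ[k]
          (↥(monodromyFiltration fbar (-(n : ℤ) - 1)) ⧸
            Submodule.comap (monodromyFiltration fbar (-(n : ℤ) - 1)).subtype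
              (monodromyFiltration fbar (-(n : ℤ) - 2)))),
        -- `gbar` is the map `Gr_{n-1}^M(V̄,f̄) → Gr_{-(n-1)-2}^M(V̄,f̄)` induced by
        -- `f̄^((n-1)+1) = f̄^n`:
        (∀ (y : V ⧸ LinearMap.ker f) (hy : y ∈ monodromyFiltration fbar ((n : ℤ) - 1))
            (hfy : (fbar ^ n) y ∈ monodromyFiltration fbar (-(n : ℤ) - 1)),
          gbar (Submodule.Quotient.mk ⟨y, hy⟩)
            = Submodule.Quotient.mk ⟨(fbar ^ n) y, hfy⟩) →
      ∀ (φ : (↥(monodromyFiltration f n) ⧸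
            Submodule.comap (monodromyFiltration f (n : ℤ)).subtype
              (monodromyFiltration f ((n : ℤ) - 1))) →ₗ[k]
          (↥(monodromyFiltration fbar ((n : ℤ) - 1)) ⧸
            Submodule.comap (monodromyFiltration fbar ((n : ℤ) - 1)).subtype
              (monodromyFiltration fbar ((n : ℤ) - 2)))),
        -- `φ` is the map `Gr_n^M(V,f) → Gr_{n-1}^M(V̄,f̄)` induced by the quotient map:
        (∀ (x : V) (hx : x ∈ monodromyFiltration f (n : ℤ))
            (hpx : (LinearMap.ker f).mkQ x ∈ monodromyFiltration fbar ((n : ℤ) - 1)),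
          φ (Submodule.Quotient.mk ⟨x, hx⟩)
            = Submodule.Quotient.mk ⟨(LinearMap.ker f).mkQ x, hpx⟩) →
        Set.BijOn φ (LinearMap.ker g) (LinearMap.ker gbar) := by
  classical
  set p := (LinearMap.ker f).mkQ with hp
  have hA : ∀ m : ℤ, Submodule.map p (monodromyFiltration f m)
      = monodromyFiltration fbar (m - 1) := mf_part_a f fbar hfbar
  have hfpow := fbar_pow f fbar hfbar
  refine ⟨hA n, ?_⟩
  intro g hg gbar hgbar φ hφ
  -- the membership `p x ∈ M̄ (n-1)` for `x ∈ M n`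
  have hpmem : ∀ {x : V}, x ∈ monodromyFiltration f (n : ℤ) →
      p x ∈ monodromyFiltration fbar ((n : ℤ) - 1) := fun hx =>
    (hA n) ▸ Submodule.mem_map_of_mem hx
  -- f^(n+1) x ∈ M (-n-2) for x ∈ M n
  have hfn1 : ∀ {x : V}, x ∈ monodromyFiltration f (n : ℤ) →
      (f ^ (n + 1)) x ∈ monodromyFiltration f (-(n : ℤ) - 2) := by
    intro x hx
    have := mf_pow_mem f (n + 1) hx
    exact mf_mono f (by push_cast; omega) this
  have hfn0 : ∀ {x : V}, x ∈ monodromyFiltration f (n : ℤ) →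
      (f ^ n) x ∈ monodromyFiltration f (-(n : ℤ)) := by
    intro x hx
    have := mf_pow_mem f n hx
    exact mf_mono f (by push_cast; omega) this
  -- membership for `f̄^n (p x)` with `x ∈ M n`
  have hfybar : ∀ {x : V}, x ∈ monodromyFiltration f (n : ℤ) →
      (fbar ^ n) (p x) ∈ monodromyFiltration fbar (-(n : ℤ) - 1) := by
    intro x hx
    rw [hfpow]
    have h1 : (f ^ n) x ∈ monodromyFiltration f (-(n : ℤ)) := hfn0 hx
    have h2 := (hA (-(n : ℤ))) ▸ Submodule.mem_map_of_mem (f := p) h1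
    exact h2
  -- injectivity of φ on the whole domain
  have hinj : ∀ a, φ a = 0 → a = 0 := by
    intro a h0
    obtain ⟨⟨x, hx⟩, rfl⟩ := Submodule.Quotient.mk_surjective _ a
    rw [hφ x hx (hpmem hx), Submodule.Quotient.mk_eq_zero, Submodule.mem_comap,
      Submodule.subtype_apply] at h0
    rw [show (n : ℤ) - 2 = ((n : ℤ) - 1) - 1 by ring, ← hA ((n : ℤ) - 1)] at h0
    obtain ⟨y, hy, hyx⟩ := h0
    have hker : x - y ∈ LinearMap.ker f := by
      rw [← Submodule.ker_mkQ (LinearMap.ker f), LinearMap.mem_ker, map_sub, ← hp, hyx, sub_self]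
    have hxM : x ∈ monodromyFiltration f ((n : ℤ) - 1) := by
      have h1 : x - y ∈ monodromyFiltration f ((n : ℤ) - 1) :=
        mf_mono f (by omega) (mf_ker_le f hker)
      simpa using add_mem hy h1
    rw [Submodule.Quotient.mk_eq_zero, Submodule.mem_comap, Submodule.subtype_apply]
    exact hxM
  refine ⟨?_, ?_, ?_⟩
  · -- MapsTo
    intro a ha
    obtain ⟨⟨x, hx⟩, rfl⟩ := Submodule.Quotient.mk_surjective _ a
    rw [SetLike.mem_coe, LinearMap.mem_ker, hg x hx (hfn1 hx),
      Submodule.Quotient.mk_eq_zero, Submodule.mem_comap, Submodule.subtype_apply] at ha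
    -- ha : f^(n+1) x ∈ M (-n-3)
    have hkey : (f ^ (n + 1)) x ∈ Submodule.map f (monodromyFiltration f (-(n : ℤ) - 1)) := by
      have h1 := mf_neg_le_map f (m := -(n : ℤ) - 3) (by omega) ha
      rwa [show -(n : ℤ) - 3 + 2 = -(n : ℤ) - 1 by ring] at h1
    obtain ⟨w, hw, hfw⟩ := hkey
    rw [SetLike.mem_coe, LinearMap.mem_ker, hφ x hx (hpmem hx),
      hgbar (p x) (hpmem hx) (hfybar hx), Submodule.Quotient.mk_eq_zero, Submodule.mem_comap,
      Submodule.subtype_apply]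
    show (fbar ^ n) (p x) ∈ monodromyFiltration fbar (-(n : ℤ) - 2)
    rw [hp, hfpow]
    -- goal : p (f^n x) ∈ M̄ (-n-2)
    have h2 : p ((f ^ n) x) = p w := by
      rw [hp, Submodule.mkQ_apply, Submodule.mkQ_apply, Submodule.Quotient.eq]
      rw [LinearMap.mem_ker, map_sub, hfw, ← Module.End.mul_apply f (f ^ n) x, ← pow_succ',
        sub_self]
    rw [show ((LinearMap.ker f).mkQ : V →ₗ[k] V ⧸ LinearMap.ker f) ((f ^ n) x) = p ((f ^ n) x) from rfl,
      h2, show -(n : ℤ) - 2 = (-(n : ℤ) - 1) - 1 by ring, ← hA (-(n : ℤ) - 1)]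
    exact Submodule.mem_map_of_mem hw
  · -- InjOn
    intro a _ b _ hab
    have := hinj (a - b) (by rw [map_sub, hab, sub_self])
    exact sub_eq_zero.mp this
  · -- SurjOn
    intro b hb
    obtain ⟨⟨y, hy⟩, rfl⟩ := Submodule.Quotient.mk_surjective _ b
    have hy' := hy
    rw [← hA n] at hy'
    obtain ⟨x, hx, hxy⟩ := hy'
    rw [SetLike.mem_coe] at hx
    have hyfx : (fbar ^ n) y ∈ monodromyFiltration fbar (-(n : ℤ) - 1) := by
      rw [← hxy]; exact hfybar hx
    rw [SetLike.mem_coe, LinearMap.mem_ker, hgbar y hy hyfx, Submodule.Quotient.mk_eq_zero,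
      Submodule.mem_comap, Submodule.subtype_apply] at hb
    -- hb : f̄^n y ∈ M̄ (-n-2)
    have hb' : (fbar ^ n) y ∈ monodromyFiltration fbar (-(n : ℤ) - 2) := hb
    rw [← hxy, hp, hfpow, show -(n : ℤ) - 2 = (-(n : ℤ) - 1) - 1 by ring,
      ← hA (-(n : ℤ) - 1)] at hb'
    obtain ⟨w, hw, hwx⟩ := hb'
    have hfeq : (f ^ (n + 1)) x = f w := by
      have hker : (f ^ n) x - w ∈ LinearMap.ker f := by
        rw [← Submodule.ker_mkQ (LinearMap.ker f), LinearMap.mem_ker, map_sub, ← hp, hwx,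
          sub_self]
      have h1 := LinearMap.mem_ker.mp hker
      rw [map_sub, sub_eq_zero] at h1
      rw [← Module.End.mul_apply f (f ^ n) x, ← pow_succ'] at h1
      exact h1
    have hfx3 : (f ^ (n + 1)) x ∈ monodromyFiltration f (-(n : ℤ) - 3) := by
      rw [hfeq]
      have h1 := mf_map_le f (Submodule.mem_map_of_mem (f := f) hw)
      exact mf_mono f (by omega) h1
    refine ⟨Submodule.Quotient.mk ⟨x, hx⟩, ?_, ?_⟩
    · show g (Submodule.Quotient.mk ⟨x, hx⟩) = 0
      rw [hg x hx (hfn1 hx), Submodule.Quotient.mk_eq_zero, Submodule.mem_comap,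
        Submodule.subtype_apply]
      exact hfx3
    · rw [hφ x hx (hpmem hx)]
      exact congrArg _ (Subtype.ext hxy)
end

section
/- Let k be a field, V a finite-dimensional k-vector space, B: V × V → k a nondegenerate symmetric bilinear form, and f: V → V a nilpotent endomorphism which is self-adjoint with respect to B, i.e. B(f(x), y) = B(x, f(y)) for all x, y. For n ∈ ℤ let M_n(V,f) = Σ_{i,j ∈ ℕ, j−i=n} (range(f^i) ∩ ker(f^{j+1})). Then for every n ∈ ℤ, the B-orthogonal complement of M_n(V,f) equals M_{−n−1}(V,f). -/
set_option linter.unusedSectionVars false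
set_option maxHeartbeats 1000000



section Transport
variable {k V W : Type*} [Field k] [AddCommGroup V] [Module k V] [AddCommGroup W] [Module k W]

lemma pow_comm_equiv (e : V ≃ₗ[k] W) (f : V →ₗ[k] V) (g : W →ₗ[k] W)
    (h : ∀ v, e (f v) = g (e v)) (p : ℕ) : ∀ v : V, e ((f ^ p) v) = (g ^ p) (e v) := by
  induction p with
  | zero => simp
  | succ q ih =>
    intro v
    rw [pow_succ', pow_succ', Module.End.mul_apply, Module.End.mul_apply, h, ih]

lemma term_le_monodromy (f : V →ₗ[k] V) (n : ℤ) (i j : ℕ) (hij : (j : ℤ) - i = n) :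
    LinearMap.range (f ^ i) ⊓ LinearMap.ker (f ^ (j + 1)) ≤ monodromyFiltration f n :=
  le_iSup_of_le i <| le_iSup_of_le j <| le_iSup_of_le hij le_rfl

lemma monodromy_map_equiv (e : V ≃ₗ[k] W) (f : V →ₗ[k] V) (g : W →ₗ[k] W)
    (h : ∀ v, e (f v) = g (e v)) (n : ℤ) :
    (monodromyFiltration f n).map (e : V →ₗ[k] W) = monodromyFiltration g n := by
  have hrange : ∀ p : ℕ, (LinearMap.range (f ^ p)).map (e : V →ₗ[k] W)
      = LinearMap.range (g ^ p) := by
    intro p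
    ext w
    simp only [Submodule.mem_map, LinearMap.mem_range]
    constructor
    · rintro ⟨_, ⟨v, rfl⟩, rfl⟩
      exact ⟨e v, (pow_comm_equiv e f g h p v).symm⟩
    · rintro ⟨w', rfl⟩
      refine ⟨(f ^ p) (e.symm w'), ⟨_, rfl⟩, ?_⟩
      show e _ = _
      rw [pow_comm_equiv e f g h p]; simp
  have hker : ∀ p : ℕ, (LinearMap.ker (f ^ p)).map (e : V →ₗ[k] W)
      = LinearMap.ker (g ^ p) := by
    intro p
    ext w
    simp only [Submodule.mem_map, LinearMap.mem_ker]
    constructor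
    · rintro ⟨v, hv, rfl⟩
      show (g ^ p) (e v) = 0
      rw [← pow_comm_equiv e f g h p, hv, map_zero]
    · intro hw
      refine ⟨e.symm w, ?_, by simp⟩
      have := pow_comm_equiv e f g h p (e.symm w)
      simp only [LinearEquiv.apply_symm_apply] at this
      rw [hw] at this
      exact e.injective (by simpa using this)
  unfold monodromyFiltration
  simp only [Submodule.map_iSup]
  refine iSup_congr fun i => iSup_congr fun j => iSup_congr fun hij => ?_
  rw [Submodule.map_inf (e : V →ₗ[k] W) e.injective, hrange, hker]

lemma monodromy_rank_equiv (e : V ≃ₗ[k] W) (f : V →ₗ[k] V) (g : W →ₗ[k] W)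
    (h : ∀ v, e (f v) = g (e v)) (n : ℤ) :
    Module.finrank k (monodromyFiltration f n) = Module.finrank k (monodromyFiltration g n) := by
  rw [← monodromy_map_equiv e f g h n, LinearEquiv.finrank_map_eq]

end Transport



section Pi
variable {k : Type*} [Field k] {ι : Type*} [Fintype ι] [DecidableEq ι]
  {Vv : ι → Type*} [∀ i, AddCommGroup (Vv i)] [∀ i, Module k (Vv i)]
  (ff : ∀ i, Vv i →ₗ[k] Vv i)

/-- the product endomorphism -/
noncomputable def piMap : (∀ i, Vv i) →ₗ[k] (∀ i, Vv i) :=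
  LinearMap.pi fun i => (ff i) ∘ₗ LinearMap.proj i


lemma piMap_apply (x : ∀ i, Vv i) (i : ι) : (piMap ff) x i = ff i (x i) := rfl

lemma piMap_pow_apply (p : ℕ) (x : ∀ i, Vv i) (i : ι) :
    ((piMap ff ^ p) x) i = ((ff i) ^ p) (x i) := by
  induction p generalizing x with
  | zero => simp
  | succ q ih =>
    rw [pow_succ', pow_succ', Module.End.mul_apply, Module.End.mul_apply, piMap_apply, ih]

lemma monodromy_pi (n : ℤ) :
    monodromyFiltration (piMap ff) n = Submodule.pi Set.univ (fun i => monodromyFiltration (ff i) n) := by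
  apply le_antisymm
  · refine iSup_le fun i => iSup_le fun j => iSup_le fun hij => fun x hx => ?_
    obtain ⟨⟨y, rfl⟩, hk⟩ := hx
    simp only [SetLike.mem_coe, LinearMap.mem_ker] at hk
    rw [Submodule.mem_pi]
    intro c _
    refine term_le_monodromy (ff c) n i j hij ⟨⟨y c, (piMap_pow_apply ff i y c).symm⟩, ?_⟩
    simp only [SetLike.mem_coe, LinearMap.mem_ker]
    have h2 : ((piMap ff ^ (j+1)) ((piMap ff ^ i) y)) c = 0 := by rw [hk]; rfl
    rw [piMap_pow_apply] at h2
    exact h2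
  · intro x hx
    rw [Submodule.mem_pi] at hx
    have hxs : x = ∑ i : ι, Pi.single i (x i) := by
      rw [Finset.univ_sum_single]
    rw [hxs]
    refine Submodule.sum_mem _ fun c _ => ?_
    have hxc := hx c (Set.mem_univ c)
    have hmap : (monodromyFiltration (ff c) n).map (LinearMap.single k Vv c)
        ≤ monodromyFiltration (piMap ff) n := by
      unfold monodromyFiltration
      simp only [Submodule.map_iSup]
      refine iSup_le fun i => iSup_le fun j => iSup_le fun hij => ?_
      refine le_trans ?_ (term_le_monodromy (piMap ff) n i j hij)
      rintro z hz
      obtain ⟨w, hw, rfl⟩ := hz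
      obtain ⟨⟨y, rfl⟩, hker⟩ := hw
      simp only [SetLike.mem_coe, LinearMap.mem_ker] at hker
      constructor
      · refine ⟨Pi.single c y, funext fun d => ?_⟩
        rw [piMap_pow_apply]
        by_cases hdc : d = c
        · subst hdc; simp
        · rw [Pi.single_eq_of_ne hdc, LinearMap.single_apply, Pi.single_eq_of_ne hdc, map_zero]
      · simp only [SetLike.mem_coe, LinearMap.mem_ker]
        funext d
        rw [piMap_pow_apply]
        by_cases hdc : d = c
        · subst hdc
          rw [LinearMap.single_apply, Pi.single_eq_same, hker]
          rfl
        · rw [LinearMap.single_apply, Pi.single_eq_of_ne hdc, map_zero]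
          rfl
    exact hmap ⟨x c, hxc, rfl⟩
end Pi

section PiRank
variable {k : Type*} [Field k] {ι : Type*} [Fintype ι] [DecidableEq ι]
  {Vv : ι → Type*} [∀ i, AddCommGroup (Vv i)] [∀ i, Module k (Vv i)]

lemma finrank_submodule_pi (S : ∀ i, Submodule k (Vv i)) [∀ i, FiniteDimensional k (Vv i)] :
    Module.finrank k (Submodule.pi Set.univ S) = ∑ i, Module.finrank k (S i) := by
  classical
  let Φ : (∀ i, S i) →ₗ[k] (∀ i, Vv i) := LinearMap.pi fun i => (S i).subtype ∘ₗ LinearMap.proj i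
  have hinj : Function.Injective Φ := by
    intro a b hab
    funext i
    have := congrFun hab i
    exact Subtype.ext this
  have hrange : LinearMap.range Φ = Submodule.pi Set.univ S := by
    ext x
    simp only [LinearMap.mem_range, Submodule.mem_pi]
    constructor
    · rintro ⟨y, rfl⟩ i _
      exact (y i).2
    · intro hx
      exact ⟨fun i => ⟨x i, hx i (Set.mem_univ i)⟩, rfl⟩
  rw [← hrange, LinearMap.finrank_range_of_inj hinj, Module.finrank_pi_fintype]
end PiRank



open Polynomial

def vv (m : ℕ) (n : ℤ) : ℕ := max (-n).toNat ((((m:ℤ) - n).toNat) / 2)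

section Block
variable {k : Type*} [Field k] (m : ℕ)

/-- The Jordan block: `k[X] ⧸ (X^m)`. -/
abbrev Jb (k) [Field k] (m : ℕ) : Type _ := k[X] ⧸ (Submodule.span k[X] {(X : k[X])^m})

/-- multiplication by `X` on the Jordan block, as a `k`-linear map. -/
noncomputable def Jbmul (k) [Field k] (m : ℕ) : Jb k m →ₗ[k] Jb k m :=
  Algebra.lsmul k k (Jb k m) (X : k[X])

lemma Jbmul_apply (q : Jb k m) : Jbmul k m q = (X : k[X]) • q := rfl

/-- images of monomials -/
noncomputable def jgen (t : ℕ) : Jb k m := Submodule.Quotient.mk ((X : k[X])^t)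

lemma jgen_eq_zero {t : ℕ} (ht : m ≤ t) : (jgen m t : Jb k m) = 0 := by
  rw [jgen, Submodule.Quotient.mk_eq_zero]
  exact Submodule.mem_span_singleton.mpr ⟨X^(t-m), by rw [smul_eq_mul, ← pow_add]; congr 1; omega⟩

lemma Jbmul_pow_mk (p : ℕ) (q : k[X]) :
    ((Jbmul k m) ^ p) (Submodule.Quotient.mk q) = Submodule.Quotient.mk ((X:k[X])^p * q) := by
  induction p with
  | zero => simp
  | succ r ih =>
    rw [pow_succ', Module.End.mul_apply, ih, Jbmul_apply, ← Submodule.Quotient.mk_smul,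
      smul_eq_mul, pow_succ']
    ring_nf

lemma Jbmul_pow_jgen (p t : ℕ) : ((Jbmul k m) ^ p) (jgen m t) = jgen m (p + t) := by
  rw [jgen, Jbmul_pow_mk, jgen, ← pow_add]

lemma jgen_li : LinearIndependent k (fun t : Fin m => (jgen m t : Jb k m)) := by
  rw [Fintype.linearIndependent_iff]
  intro g hg
  have hq : (Submodule.Quotient.mk (∑ t : Fin m, C (g t) * X ^ (t:ℕ)) : Jb k m) = 0 := by
    rw [← hg]
    calc (Submodule.Quotient.mk (∑ t : Fin m, C (g t) * X ^ (t:ℕ)) : Jb k m)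
        = ∑ t : Fin m, (Submodule.Quotient.mk (C (g t) * X ^ (t:ℕ)) : Jb k m) :=
          map_sum (Submodule.mkQ _) _ _
      _ = ∑ t : Fin m, g t • jgen m (t:ℕ) := by
          refine Finset.sum_congr rfl fun t _ => ?_
          rw [jgen, ← Submodule.Quotient.mk_smul, smul_eq_C_mul]
  rw [Submodule.Quotient.mk_eq_zero, Submodule.mem_span_singleton] at hq
  obtain ⟨a, ha⟩ := hq
  have hzero : (∑ t : Fin m, C (g t) * X ^ (t:ℕ)) = 0 := by
    rcases eq_or_ne m 0 with hm | hm
    · subst hm; simp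
    refine Polynomial.eq_zero_of_dvd_of_degree_lt (p := (X:k[X])^m) ⟨a, ?_⟩ ?_
    · rw [← ha, smul_eq_mul, mul_comm]
    · rw [degree_X_pow]
      exact degree_sum_fin_lt g
  intro t
  have := congrArg (fun q => Polynomial.coeff q (t:ℕ)) hzero
  simp only [Polynomial.finset_sum_coeff, coeff_C_mul, coeff_X_pow, coeff_zero] at this
  rw [Finset.sum_eq_single t] at this
  · simpa using this
  · intro b _ hb
    rw [if_neg (by simpa [Fin.val_eq_val] using (Ne.symm hb)), mul_zero]
  · intro h; exact absurd (Finset.mem_univ t) h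

/-- tail spans -/
noncomputable def Sb (a : ℕ) : Submodule k (Jb k m) :=
  Submodule.span k ((fun t => jgen m t) '' Set.Ico a m)

lemma Sb_antitone {a b : ℕ} (h : a ≤ b) : (Sb m b : Submodule k (Jb k m)) ≤ Sb m a :=
  Submodule.span_mono (Set.image_mono (Set.Ico_subset_Ico_left h))

lemma Sb_top : (Sb m 0 : Submodule k (Jb k m)) = ⊤ := by
  rw [eq_top_iff]
  rintro x -
  obtain ⟨q, rfl⟩ := Submodule.Quotient.mk_surjective _ x
  induction q using Polynomial.induction_on' with
  | add p q hp hq =>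
    rw [show (Submodule.Quotient.mk (p + q) : Jb k m)
      = Submodule.Quotient.mk p + Submodule.Quotient.mk q from rfl]
    exact Submodule.add_mem _ hp hq
  | monomial t c =>
    have hmc : (Submodule.Quotient.mk ((monomial t) c) : Jb k m) = c • jgen m t := by
      rw [jgen, ← Submodule.Quotient.mk_smul, smul_eq_C_mul, C_mul_X_pow_eq_monomial]
    rw [hmc]
    rcases lt_or_ge t m with ht | ht
    · exact Submodule.smul_mem _ _ (Submodule.subset_span ⟨t, ⟨Nat.zero_le _, ht⟩, rfl⟩)
    · rw [jgen_eq_zero m ht, smul_zero]; exact Submodule.zero_mem _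
end Block

section Block2
variable {k : Type*} [Field k] (m : ℕ)

lemma Sb_eq_span_range (a : ℕ) :
    (Sb m a : Submodule k (Jb k m)) =
      Submodule.span k (Set.range (fun s : Fin (m - a) => (jgen m (a + s) : Jb k m))) := by
  unfold Sb
  congr 1
  ext x
  constructor
  · rintro ⟨t, ⟨hat, htm⟩, rfl⟩
    exact ⟨⟨t - a, by omega⟩, by simp; congr 1; omega⟩
  · rintro ⟨s, rfl⟩
    exact ⟨a + s, ⟨by omega, by omega⟩, rfl⟩

lemma Sb_finrank (a : ℕ) : Module.finrank k (Sb m a : Submodule k (Jb k m)) = m - a := by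
  rw [Sb_eq_span_range (k := k)]
  have hli : LinearIndependent k (fun s : Fin (m - a) => (jgen m (a + s) : Jb k m)) := by
    have := (jgen_li (k := k) m).comp (fun s : Fin (m - a) => (⟨a + s, by omega⟩ : Fin m))
      (fun s s' hss => by
        simp only [Fin.mk.injEq] at hss
        exact Fin.ext (by omega))
    exact this
  rw [finrank_span_eq_card hli, Fintype.card_fin]

instance Jb_finiteDimensional : FiniteDimensional k (Jb k m) := by
  classical
  have : (⊤ : Submodule k (Jb k m)).FG := by
    refine ⟨(Finset.Ico 0 m).image (fun t => jgen m t), ?_⟩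
    rw [← Sb_top m]
    unfold Sb
    congr 1
    rw [Finset.coe_image, Finset.coe_Ico]
  rw [← Module.finite_def] at this
  exact this

lemma Jb_finrank : Module.finrank k (Jb k m) = m := by
  rw [← finrank_top, ← Sb_top m, Sb_finrank]
  omega

lemma Jb_range (p : ℕ) : LinearMap.range ((Jbmul k m) ^ p) = Sb m p := by
  apply le_antisymm
  · rintro x ⟨y, rfl⟩
    obtain ⟨q, rfl⟩ := Submodule.Quotient.mk_surjective _ y
    rw [Jbmul_pow_mk]
    induction q using Polynomial.induction_on' with
    | add r s hr hs =>
      rw [mul_add]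
      rw [show (Submodule.Quotient.mk ((X:k[X])^p * r + (X:k[X])^p * s) : Jb k m)
        = Submodule.Quotient.mk ((X:k[X])^p * r) + Submodule.Quotient.mk ((X:k[X])^p * s) from rfl]
      exact Submodule.add_mem _ hr hs
    | monomial t c =>
      have hmc : (Submodule.Quotient.mk ((X:k[X])^p * (monomial t) c) : Jb k m)
          = c • jgen m (p + t) := by
        rw [jgen, ← Submodule.Quotient.mk_smul]
        congr 1
        rw [smul_eq_C_mul, ← C_mul_X_pow_eq_monomial, pow_add]
        ring
      rw [hmc]
      rcases lt_or_ge (p + t) m with ht | ht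
      · exact Submodule.smul_mem _ _ (Submodule.subset_span ⟨p + t, ⟨by omega, ht⟩, rfl⟩)
      · rw [jgen_eq_zero m ht, smul_zero]; exact Submodule.zero_mem _
  · rw [Sb, Submodule.span_le]
    rintro x ⟨t, ⟨hpt, htm⟩, rfl⟩
    exact ⟨jgen m (t - p), by rw [Jbmul_pow_jgen]; congr 1; omega⟩

lemma Jb_ker (p : ℕ) : LinearMap.ker ((Jbmul k m) ^ p) = Sb m (m - p) := by
  have hle : (Sb m (m - p) : Submodule k (Jb k m)) ≤ LinearMap.ker ((Jbmul k m) ^ p) := by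
    rw [Sb, Submodule.span_le]
    rintro x ⟨t, ⟨hmt, htm⟩, rfl⟩
    rw [SetLike.mem_coe, LinearMap.mem_ker, Jbmul_pow_jgen]
    exact jgen_eq_zero m (by omega)
  have h1 : Module.finrank k (LinearMap.range ((Jbmul k m) ^ p))
      + Module.finrank k (LinearMap.ker ((Jbmul k m) ^ p)) = m := by
    rw [LinearMap.finrank_range_add_finrank_ker, Jb_finrank]
  rw [Jb_range, Sb_finrank] at h1
  exact (Submodule.eq_of_le_of_finrank_le hle (by rw [Sb_finrank]; omega)).symm

lemma Sb_inf (a b : ℕ) : (Sb m a ⊓ Sb m b : Submodule k (Jb k m)) = Sb m (max a b) := by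
  apply le_antisymm
  · rcases le_total a b with h | h
    · rw [max_eq_right h]; exact inf_le_right
    · rw [max_eq_left h]; exact inf_le_left
  · exact le_inf (Sb_antitone m (le_max_left a b)) (Sb_antitone m (le_max_right a b))

lemma Jb_monodromy (n : ℤ) :
    monodromyFiltration (Jbmul k m) n = Sb m (vv m n) := by
  apply le_antisymm
  · refine iSup_le fun i => iSup_le fun j => iSup_le fun hij => ?_
    rw [Jb_range, Jb_ker, Sb_inf]
    exact Sb_antitone m (by unfold vv; omega)
  · have h1 : ((((vv m n : ℤ) + n).toNat : ℤ)) - (vv m n : ℤ) = n := by unfold vv; omega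
    refine le_trans ?_ (term_le_monodromy (Jbmul k m) n (vv m n) ((vv m n : ℤ) + n).toNat h1)
    rw [Jb_range, Jb_ker, Sb_inf]
    apply le_of_eq
    congr 1
    unfold vv
    omega

lemma Jb_monodromy_finrank (n : ℤ) :
    Module.finrank k (monodromyFiltration (Jbmul k m) n) = m - vv m n := by
  rw [Jb_monodromy, Sb_finrank]

lemma vv_add (n : ℤ) : (m - vv m n) + (m - vv m (-n-1)) = m := by
  unfold vv; omega

end Block2


section Orth
variable {k V : Type*} [Field k] [AddCommGroup V] [Module k V]
  (B : LinearMap.BilinForm k V) (f : V →ₗ[k] V)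
  (hself : ∀ x y, B (f x) y = B x (f y))

include hself in
lemma pow_self_adjoint (p : ℕ) (x y : V) : B ((f ^ p) x) y = B x ((f ^ p) y) := by
  induction p generalizing x y with
  | zero => simp
  | succ q ih =>
    rw [pow_succ, Module.End.mul_apply, Module.End.mul_apply, ih, hself]
    congr 1
    rw [← Module.End.mul_apply, ← Module.End.mul_apply, ← pow_succ, ← pow_succ']

include hself in
lemma monodromy_le_orthogonal (n : ℤ) :
    monodromyFiltration f (-n-1) ≤ B.orthogonal (monodromyFiltration f n) := by
  refine iSup_le fun i' => iSup_le fun j' => iSup_le fun hij' => ?_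
  rintro x ⟨⟨a, rfl⟩, hkx⟩
  simp only [SetLike.mem_coe, LinearMap.mem_ker] at hkx
  intro y hy
  -- show B y ((f^i') a) = 0
  have : monodromyFiltration f n ≤ LinearMap.ker (B.flip ((f ^ i') a)) := by
    refine iSup_le fun i => iSup_le fun j => iSup_le fun hij => ?_
    rintro z ⟨⟨b, rfl⟩, hkz⟩
    simp only [SetLike.mem_coe, LinearMap.mem_ker] at hkz
    rw [LinearMap.mem_ker]
    show B ((f ^ i) b) ((f ^ i') a) = 0
    rcases le_or_gt (j + 1) i' with hc | hc
    · -- B ((f^i) b) ((f^i')a) = B (f^{i'} (f^i b)) a = 0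
      rw [← pow_self_adjoint B f hself i']
      have : (f ^ i') ((f ^ i) b) = (f ^ (i' - (j+1))) ((f ^ (j+1)) ((f ^ i) b)) := by
        conv_lhs => rw [show i' = (i' - (j+1)) + (j+1) from by omega]
        rw [pow_add, Module.End.mul_apply]
      rw [this, hkz, map_zero, map_zero, LinearMap.zero_apply]
    · -- i' ≤ j, so j' + 1 ≤ i
      have hji : j' + 1 ≤ i := by omega
      rw [pow_self_adjoint B f hself i]
      have : (f ^ i) ((f ^ i') a) = (f ^ (i - (j'+1))) ((f ^ (j'+1)) ((f ^ i') a)) := by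
        conv_lhs => rw [show i = (i - (j'+1)) + (j'+1) from by omega]
        rw [pow_add, Module.End.mul_apply]
      rw [this, hkx, map_zero, map_zero]
  exact this hy
end Orth
section RankLemma
open Polynomial DirectSum

universe u1 u2

variable {k : Type u1} [Field k]

lemma monodromy_rank_add_aux {V : Type (max u1 u2)} [AddCommGroup V] [Module k V]
    [FiniteDimensional k V] (f : V →ₗ[k] V) (hf : IsNilpotent f) (n : ℤ) :
    Module.finrank k (monodromyFiltration f n) + Module.finrank k (monodromyFiltration f (-n-1))
      = Module.finrank k V := by
  classical
  obtain ⟨N, hN⟩ := hf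
  have hXsmul : ∀ (p : ℕ) (v : V),
      ((X : k[X])^p) • (Module.AEval'.of f v) = Module.AEval'.of f ((f^p) v) := by
    intro p
    induction p with
    | zero => intro v; simp
    | succ q ih =>
      intro v
      rw [pow_succ', mul_smul, ih, Module.AEval'.X_smul_of, pow_succ', Module.End.mul_apply]
  have htor : Module.IsTorsion k[X] (Module.AEval' f) := by
    intro x
    refine ⟨⟨(X : k[X])^N, mem_nonZeroDivisors_of_ne_zero (pow_ne_zero _ X_ne_zero)⟩, ?_⟩
    show ((X : k[X])^N) • x = 0
    have h0 : ((X : k[X])^N) • (Module.AEval'.of f ((Module.AEval'.of f).symm x)) = 0 := by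
      rw [hXsmul, hN, LinearMap.zero_apply, map_zero]
    simpa using h0
  obtain ⟨ι, hι, p, hp, e, ⟨E⟩⟩ :=
    Module.equiv_directSum_of_isTorsion (R := k[X]) (M := Module.AEval' f) htor
  haveI := hι
  -- each p i ^ e i is associated to X ^ e i
  have hspan : ∀ i, (k[X] ∙ (p i ^ e i)) = (k[X] ∙ ((X : k[X]) ^ e i)) := by
    intro i
    rcases eq_or_ne (e i) 0 with he | he
    · rw [he, pow_zero, pow_zero]
    · have hw : ((X : k[X])^N) •
          (E.symm (DirectSum.lof k[X] ι (fun i => k[X] ⧸ (k[X] ∙ (p i ^ e i))) i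
            (Submodule.Quotient.mk 1))) = 0 := by
        set w := E.symm (DirectSum.lof k[X] ι (fun i => k[X] ⧸ (k[X] ∙ (p i ^ e i))) i
            (Submodule.Quotient.mk 1)) with hwdef
        have h0 : ((X : k[X])^N) • (Module.AEval'.of f ((Module.AEval'.of f).symm w)) = 0 := by
          rw [hXsmul, hN, LinearMap.zero_apply, map_zero]
        simpa using h0
      have hEw := congrArg E hw
      rw [map_smul, E.apply_symm_apply, map_zero] at hEw
      have hcomp := congrArg (fun z => DirectSum.component k[X] ι
        (fun i => k[X] ⧸ (k[X] ∙ (p i ^ e i))) i z) hEw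
      simp only [map_smul, map_zero] at hcomp
      rw [DirectSum.component.lof_self] at hcomp
      -- hcomp : X^N • mk 1 = 0 in the quotient
      rw [← Submodule.Quotient.mk_smul, smul_eq_mul, mul_one, Submodule.Quotient.mk_eq_zero,
        Submodule.mem_span_singleton] at hcomp
      obtain ⟨a, ha⟩ := hcomp
      have hdvd : p i ^ e i ∣ (X : k[X])^N := ⟨a, by rw [← ha, smul_eq_mul, mul_comm]⟩
      have hpX : p i ∣ (X : k[X]) := by
        have hprime : Prime (p i) := UniqueFactorizationMonoid.irreducible_iff_prime.mp (hp i)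
        exact hprime.dvd_of_dvd_pow (dvd_trans (dvd_pow_self (p i) he) hdvd)
      have hassoc : Associated (p i) (X : k[X]) :=
        (hp i).associated_of_dvd Polynomial.irreducible_X hpX
      exact Ideal.span_singleton_eq_span_singleton.mpr hassoc.pow_pow
  -- assemble the equivalence to a product of Jordan blocks
  let E2 : (⨁ i, k[X] ⧸ (k[X] ∙ (p i ^ e i))) ≃ₗ[k[X]] (⨁ i, Jb k (e i)) :=
    DFinsupp.mapRange.linearEquiv (fun i => Submodule.quotEquivOfEq _ _ (hspan i))
  let E3 : (⨁ i, Jb k (e i)) ≃ₗ[k[X]] (∀ i, Jb k (e i)) :=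
    DirectSum.linearEquivFunOnFintype k[X] ι (fun i => Jb k (e i))
  let Etot : Module.AEval' f ≃ₗ[k[X]] (∀ i, Jb k (e i)) := E ≪≫ₗ E2 ≪≫ₗ E3
  let ee : V ≃ₗ[k] (∀ i, Jb k (e i)) :=
    (Module.AEval'.of f) ≪≫ₗ (Etot.restrictScalars k)
  let g : (∀ i, Jb k (e i)) →ₗ[k] (∀ i, Jb k (e i)) := piMap (fun i => Jbmul k (e i))
  have hcomm : ∀ v : V, ee (f v) = g (ee v) := by
    intro v
    have h1 : ee (f v) = Etot ((X : k[X]) • (Module.AEval'.of f v)) := by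
      rw [Module.AEval'.X_smul_of]
      rfl
    have h2 : Etot ((X : k[X]) • (Module.AEval'.of f v)) = (X : k[X]) • ee v := by
      rw [map_smul]
      rfl
    rw [h1, h2]
    funext i
    rfl
  haveI : ∀ i, FiniteDimensional k (Jb k (e i)) := fun i => Jb_finiteDimensional (e i)
  have hrk : ∀ m : ℤ, Module.finrank k (monodromyFiltration f m)
      = ∑ i, (e i - vv (e i) m) := by
    intro m
    rw [monodromy_rank_equiv ee f g hcomm m, monodromy_pi, finrank_submodule_pi]
    exact Finset.sum_congr rfl fun i _ => Jb_monodromy_finrank (e i) m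
  have hV : Module.finrank k V = ∑ i, e i := by
    rw [ee.finrank_eq, Module.finrank_pi_fintype]
    exact Finset.sum_congr rfl fun i _ => Jb_finrank (e i)
  rw [hrk n, hrk (-n-1), hV, ← Finset.sum_add_distrib]
  exact Finset.sum_congr rfl fun i _ => vv_add (e i) n

lemma monodromy_rank_add {V : Type u2} [AddCommGroup V] [Module k V]
    [FiniteDimensional k V] (f : V →ₗ[k] V) (hf : IsNilpotent f) (n : ℤ) :
    Module.finrank k (monodromyFiltration f n) + Module.finrank k (monodromyFiltration f (-n-1))
      = Module.finrank k V := by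
  let eU : V ≃ₗ[k] ULift.{u1} V := ULift.moduleEquiv.symm
  let f' : ULift.{u1} V →ₗ[k] ULift.{u1} V :=
    (eU.toLinearMap) ∘ₗ f ∘ₗ (eU.symm.toLinearMap)
  have hcomm : ∀ v : V, eU (f v) = f' (eU v) := by
    intro v
    simp [f']
  have hf' : IsNilpotent f' := by
    obtain ⟨N, hN⟩ := hf
    refine ⟨N, LinearMap.ext fun w => ?_⟩
    have := pow_comm_equiv eU f f' hcomm N (eU.symm w)
    rw [LinearEquiv.apply_symm_apply] at this
    rw [← this, hN]
    simp
  rw [monodromy_rank_equiv eU f f' hcomm n, monodromy_rank_equiv eU f f' hcomm (-n-1),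
    eU.finrank_eq]
  exact monodromy_rank_add_aux f' hf' n

end RankLemma
/-- Let `V` be a finite-dimensional vector space over a field `k`,
`B` a nondegenerate symmetric bilinear form on `V`, and `f` a nilpotent endomorphism of `V`
which is self-adjoint with respect to `B`.  Then for every `n : ℤ`, the `B`-orthogonal
complement of `M n` equals `M (-n-1)`, where `M` is the monodromy weight filtration of `f`. -/
theorem orthogonal_monodromyFiltration
    {k V : Type*} [Field k] [AddCommGroup V] [Module k V] [FiniteDimensional k V]
    (B : LinearMap.BilinForm k V)
    (hB : B.Nondegenerate) (hsymm : ∀ x y, B x y = B y x)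
    (f : V →ₗ[k] V) (hf : IsNilpotent f)
    (hself : ∀ x y, B (f x) y = B x (f y)) (n : ℤ) :
    B.orthogonal (monodromyFiltration f n) = monodromyFiltration f (-n - 1) := by
  have hrefl : B.IsRefl := fun x y h => by rw [hsymm]; exact h
  have h1 : monodromyFiltration f (-n-1) ≤ B.orthogonal (monodromyFiltration f n) :=
    monodromy_le_orthogonal B f hself n
  have h2 := monodromy_rank_add f hf n
  have h3 := LinearMap.BilinForm.finrank_orthogonal hB (monodromyFiltration f n)
  have h4 : Module.finrank k (monodromyFiltration f n) ≤ Module.finrank k V :=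
    Submodule.finrank_le _
  refine (Submodule.eq_of_le_of_finrank_le h1 ?_).symm
  omega
end
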